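/- arXiv:2601.07817 — 4 statements merged into one kernel-verified Lean document; each statement's English description precedes it below -/
import Mathlib

section
/- Let Q(u, v) ∈ ℤ[u, v] be a quadratic form and let r be a positive integer. Then there exist N ≤ 2^{Ω(r)} rank-two sublattices Λ₁, …, Λ_N ⊆ ℤ² such that for all integers u, v: Q(u, v) ≡ 0 (mod r) if and only if (u, v) lies in Λ₁ ∪ ⋯ ∪ Λ_N. -/
open Module

def SolSet (α β γ : ℤ) (r : ℕ) : Set (ℤ × ℤ) :=
  {x | (r : ℤ) ∣ α * x.1 ^ 2 + β * x.1 * x.2 + γ * x.2 ^ 2}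

lemma mem_SolSet {α β γ : ℤ} {r : ℕ} {u v : ℤ} :
    (u, v) ∈ SolSet α β γ r ↔ (r : ℤ) ∣ α * u ^ 2 + β * u * v + γ * v ^ 2 := Iff.rfl

def lmap (a b c d : ℤ) : ℤ × ℤ →ₗ[ℤ] ℤ × ℤ where
  toFun x := (a * x.1 + b * x.2, c * x.1 + d * x.2)
  map_add' x y := by simp only [Prod.fst_add, Prod.snd_add, Prod.mk_add_mk, Prod.mk.injEq]
                     constructor <;> ring
  map_smul' m x := by simp only [Prod.smul_fst, Prod.smul_snd, RingHom.id_apply, Prod.smul_mk,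
                        smul_eq_mul, Prod.mk.injEq]
                      constructor <;> ring

lemma lmap_apply (a b c d s t : ℤ) : lmap a b c d (s, t) = (a * s + b * t, c * s + d * t) := rfl

lemma lmap_inj {a b c d : ℤ} (h : a * d - b * c ≠ 0) : Function.Injective (lmap a b c d) := by
  intro x y hxy
  have h1 : a * x.1 + b * x.2 = a * y.1 + b * y.2 := congrArg Prod.fst hxy
  have h2 : c * x.1 + d * x.2 = c * y.1 + d * y.2 := congrArg Prod.snd hxy
  have e1 : (a * d - b * c) * x.1 = (a * d - b * c) * y.1 := by linear_combination d * h1 - b * h2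
  have e2 : (a * d - b * c) * x.2 = (a * d - b * c) * y.2 := by linear_combination a * h2 - c * h1
  exact Prod.ext (mul_left_cancel₀ h e1) (mul_left_cancel₀ h e2)

def Covered (S : Set (ℤ × ℤ)) (n : ℕ) : Prop :=
  ∃ L : List (Submodule ℤ (ℤ × ℤ)), L.length ≤ n ∧
    (∀ Λ ∈ L, finrank ℤ Λ = 2) ∧ ∀ x, x ∈ S ↔ ∃ Λ ∈ L, x ∈ Λ

lemma covered_mono {S : Set (ℤ × ℤ)} {n n' : ℕ} (h : Covered S n) (hn : n ≤ n') :
    Covered S n' := by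
  obtain ⟨L, hL, h2, h3⟩ := h
  exact ⟨L, hL.trans hn, h2, h3⟩

lemma covered_congr {S T : Set (ℤ × ℤ)} {n : ℕ} (hST : ∀ x, x ∈ S ↔ x ∈ T)
    (h : Covered T n) : Covered S n := by
  obtain ⟨L, hL, h2, h3⟩ := h
  exact ⟨L, hL, h2, fun x => (hST x).trans (h3 x)⟩

lemma covered_univ : Covered Set.univ 1 := by
  refine ⟨[⊤], by simp, ?_, ?_⟩
  · intro Λ hΛ
    simp only [List.mem_singleton] at hΛ
    subst hΛ
    rw [finrank_top]
    simp [finrank_prod]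
  · intro x
    simp

lemma covered_union {S T : Set (ℤ × ℤ)} {m n : ℕ} (hS : Covered S m) (hT : Covered T n) :
    Covered (S ∪ T) (m + n) := by
  obtain ⟨L1, hL1, h12, h13⟩ := hS
  obtain ⟨L2, hL2, h22, h23⟩ := hT
  refine ⟨L1 ++ L2, by simp; omega, ?_, ?_⟩
  · intro Λ hΛ
    rcases List.mem_append.1 hΛ with h | h
    exacts [h12 Λ h, h22 Λ h]
  · intro x
    simp only [Set.mem_union, h13, h23, List.mem_append]
    constructor
    · rintro (⟨Λ, hΛ, hx⟩ | ⟨Λ, hΛ, hx⟩) <;> exact ⟨Λ, by tauto, hx⟩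
    · rintro ⟨Λ, hΛ | hΛ, hx⟩
      exacts [Or.inl ⟨Λ, hΛ, hx⟩, Or.inr ⟨Λ, hΛ, hx⟩]

lemma covered_image {S : Set (ℤ × ℤ)} {n : ℕ} (f : ℤ × ℤ →ₗ[ℤ] ℤ × ℤ)
    (hf : Function.Injective f) (h : Covered S n) : Covered (f '' S) n := by
  obtain ⟨L, hL, h2, h3⟩ := h
  refine ⟨L.map (Submodule.map f), by simpa using hL, ?_, ?_⟩
  · intro Λ hΛ
    simp only [List.mem_map] at hΛ
    obtain ⟨Λ', hΛ', rfl⟩ := hΛ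
    rw [← (Submodule.equivMapOfInjective f hf Λ').finrank_eq]
    exact h2 Λ' hΛ'
  · intro x
    simp only [Set.mem_image, List.mem_map]
    constructor
    · rintro ⟨y, hy, rfl⟩
      obtain ⟨Λ, hΛ, hyΛ⟩ := (h3 y).1 hy
      exact ⟨Submodule.map f Λ, ⟨Λ, hΛ, rfl⟩, Submodule.mem_map_of_mem hyΛ⟩
    · rintro ⟨_, ⟨Λ, hΛ, rfl⟩, hx⟩
      obtain ⟨y, hyΛ, rfl⟩ := hx
      exact ⟨y, (h3 y).2 ⟨Λ, hΛ, hyΛ⟩, rfl⟩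

lemma sol_line1 {p m : ℕ} (hp : 0 < p) {α β γ l A : ℤ}
    (hA : α + β * l + γ * l ^ 2 = (p : ℤ) * A) (u v : ℤ) :
    ((u, v) ∈ SolSet α β γ (p * m) ∧ (p : ℤ) ∣ (v - l * u)) ↔
      (u, v) ∈ (lmap 1 0 l p) '' SolSet A (β + 2 * γ * l) (γ * p) m := by
  have hp0 : (p : ℤ) ≠ 0 := by exact_mod_cast hp.ne'
  have hpm : ((p * m : ℕ) : ℤ) = (p : ℤ) * m := by push_cast; ring
  have key : ∀ s t : ℤ, α * s ^ 2 + β * s * (l * s + p * t) + γ * (l * s + p * t) ^ 2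
      = (p : ℤ) * (A * s ^ 2 + (β + 2 * γ * l) * s * t + γ * p * t ^ 2) := by
    intro s t; linear_combination s ^ 2 * hA
  constructor
  · rintro ⟨hQ, hv⟩
    rw [mem_SolSet, hpm] at hQ
    obtain ⟨t, ht⟩ := hv
    have hv' : v = l * u + p * t := by linarith
    refine ⟨(u, t), ?_, ?_⟩
    · rw [mem_SolSet]
      rw [hv', key u t, mul_dvd_mul_iff_left hp0] at hQ
      exact hQ
    · rw [lmap_apply, Prod.mk.injEq]
      constructor <;> linarith
  · rintro ⟨⟨s, t⟩, hst, hst'⟩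
    rw [mem_SolSet] at hst
    rw [lmap_apply, Prod.mk.injEq] at hst'
    obtain ⟨hu, hv⟩ := hst'
    have hu' : u = s := by linarith
    have hv' : v = l * s + p * t := by linarith
    refine ⟨?_, ⟨t, by rw [hu', hv']; ring⟩⟩
    rw [mem_SolSet, hpm, hu', hv', key s t]
    exact mul_dvd_mul_left _ hst

lemma sol_line2 {p m : ℕ} (hp : 0 < p) {α β γ γ' : ℤ} (hγ : γ = (p : ℤ) * γ') (u v : ℤ) :
    ((u, v) ∈ SolSet α β γ (p * m) ∧ (p : ℤ) ∣ u) ↔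
      (u, v) ∈ (lmap p 0 0 1) '' SolSet (α * p) β γ' m := by
  have hp0 : (p : ℤ) ≠ 0 := by exact_mod_cast hp.ne'
  have hpm : ((p * m : ℕ) : ℤ) = (p : ℤ) * m := by push_cast; ring
  have key : ∀ s t : ℤ, α * ((p : ℤ) * s) ^ 2 + β * ((p : ℤ) * s) * t + γ * t ^ 2
      = (p : ℤ) * (α * p * s ^ 2 + β * s * t + γ' * t ^ 2) := by
    intro s t; linear_combination t ^ 2 * hγ
  constructor
  · rintro ⟨hQ, hu⟩
    rw [mem_SolSet, hpm] at hQ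
    obtain ⟨s, hs⟩ := hu
    refine ⟨(s, v), ?_, ?_⟩
    · rw [mem_SolSet]
      rw [hs, key s v, mul_dvd_mul_iff_left hp0] at hQ
      exact hQ
    · rw [lmap_apply, Prod.mk.injEq]
      constructor <;> linarith
  · rintro ⟨⟨s, t⟩, hst, hst'⟩
    rw [mem_SolSet] at hst
    rw [lmap_apply, Prod.mk.injEq] at hst'
    obtain ⟨hu, hv⟩ := hst'
    have hu' : u = p * s := by linarith
    have hv' : v = t := by linarith
    refine ⟨?_, ⟨s, hu'⟩⟩
    rw [mem_SolSet, hpm, hu', hv', key s t]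
    exact mul_dvd_mul_left _ hst

lemma dvd_sq_iff {r p : ℕ} (hr : 0 < r) (z : ℤ) :
    (r : ℤ) ∣ (p : ℤ) ^ 2 * z ↔ ((r / r.gcd (p ^ 2) : ℕ) : ℤ) ∣ z := by
  set g := r.gcd (p ^ 2) with hg
  have hg0 : 0 < g := Nat.gcd_pos_of_pos_left _ hr
  have hgr : g ∣ r := Nat.gcd_dvd_left _ _
  have hgp : g ∣ p ^ 2 := Nat.gcd_dvd_right _ _
  obtain ⟨r', hr'⟩ := hgr
  obtain ⟨e, he⟩ := hgp
  have hcop : Nat.Coprime r' e := by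
    have := Nat.coprime_div_gcd_div_gcd (m := r) (n := p ^ 2) hg0
    rwa [← hg, hr', he, Nat.mul_div_cancel_left _ hg0, Nat.mul_div_cancel_left _ hg0] at this
  have hrg : r / g = r' := by rw [hr', Nat.mul_div_cancel_left _ hg0]
  have heZ : (p : ℤ) ^ 2 = (g : ℤ) * e := by exact_mod_cast he
  have hrZ : (r : ℤ) = (g : ℤ) * r' := by exact_mod_cast hr'
  rw [hrg]
  constructor
  · intro h
    rw [hrZ, show (p : ℤ) ^ 2 * z = (g : ℤ) * ((e : ℤ) * z) by rw [heZ]; ring,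
      mul_dvd_mul_iff_left (a := (g : ℤ)) (by exact_mod_cast hg0.ne')] at h
    exact (Nat.isCoprime_iff_coprime.2 hcop).dvd_of_dvd_mul_left h
  · rintro ⟨k, rfl⟩
    rw [hrZ, heZ]
    exact ⟨e * k, by ring⟩

section FieldLemmas
variable {K : Type*} [Field K]

lemma quad_root2 {α β γ ρ : K} (hγ : γ ≠ 0) (hρ : γ * ρ ^ 2 + β * ρ + α = 0) :
    γ * (-ρ - β * γ⁻¹) ^ 2 + β * (-ρ - β * γ⁻¹) + α = 0 := by
  have hinv : γ * γ⁻¹ = 1 := mul_inv_cancel₀ hγ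
  linear_combination (2 * ρ * β + β ^ 2 * γ⁻¹) * hinv + hρ

lemma quad_cover {α β γ ρ : K} (hγ : γ ≠ 0) (hρ : γ * ρ ^ 2 + β * ρ + α = 0) (u v : K)
    (hQ : α * u ^ 2 + β * u * v + γ * v ^ 2 = 0) :
    v - ρ * u = 0 ∨ v - (-ρ - β * γ⁻¹) * u = 0 := by
  have hinv : γ * γ⁻¹ = 1 := mul_inv_cancel₀ hγ
  have key : γ * ((v - ρ * u) * (v - (-ρ - β * γ⁻¹) * u)) = 0 := by
    linear_combination (β * u * v - ρ * β * u ^ 2) * hinv + (-(u ^ 2)) * hρ + hQ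
  rcases mul_eq_zero.1 key with h | h
  · exact absurd h hγ
  · exact mul_eq_zero.1 h

lemma quad_noroot {α β γ : K} (hγ : γ ≠ 0) (hnr : ∀ ρ : K, γ * ρ ^ 2 + β * ρ + α ≠ 0)
    (u v : K) (hQ : α * u ^ 2 + β * u * v + γ * v ^ 2 = 0) : u = 0 ∧ v = 0 := by
  have hu : u = 0 := by
    by_contra hu
    have hinv : u * u⁻¹ = 1 := mul_inv_cancel₀ hu
    exact hnr (v * u⁻¹) (by
      linear_combination (u⁻¹ * u⁻¹) * hQ + (-(β * v * u⁻¹) - α - α * (u * u⁻¹)) * hinv)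
  refine ⟨hu, ?_⟩
  rw [hu] at hQ
  have : γ * v ^ 2 = 0 := by linear_combination hQ
  rcases mul_eq_zero.1 this with h | h
  · exact absurd h hγ
  · exact pow_eq_zero_iff (n := 2) (by norm_num) |>.1 h

lemma quad_gamma0 {α β : K} (hβ : β ≠ 0) (u v : K)
    (hQ : α * u ^ 2 + β * u * v = 0) : u = 0 ∨ v - (-α * β⁻¹) * u = 0 := by
  have hinv : β * β⁻¹ = 1 := mul_inv_cancel₀ hβ
  have key : β * (u * (v - (-α * β⁻¹) * u)) = 0 := by
    linear_combination (α * u ^ 2) * hinv + hQ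
  rcases mul_eq_zero.1 key with h | h
  · exact absurd h hβ
  · exact mul_eq_zero.1 h

lemma quad_gamma0_root {α β : K} (hβ : β ≠ 0) : α + β * (-α * β⁻¹) = 0 := by
  have hinv : β * β⁻¹ = 1 := mul_inv_cancel₀ hβ
  linear_combination (-α) * hinv

end FieldLemmas


lemma val_intCast {p : ℕ} [NeZero p] (a : ZMod p) : ((a.val : ℤ) : ZMod p) = a := by
  push_cast
  simp [ZMod.natCast_val, ZMod.cast_id]

lemma int_dvd_iff_zmod {p : ℕ} (z : ℤ) : (p : ℤ) ∣ z ↔ ((z : ZMod p) = 0) :=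
  (ZMod.intCast_zmod_eq_zero_iff_dvd z p).symm

lemma omega_mul {a b : ℕ} (ha : a ≠ 0) (hb : b ≠ 0) :
    (a * b).primeFactorsList.length
      = a.primeFactorsList.length + b.primeFactorsList.length := by
  simpa using (Nat.perm_primeFactorsList_mul ha hb).length_eq

lemma main_covered : ∀ r : ℕ, 0 < r → ∀ α β γ : ℤ,
    Covered (SolSet α β γ r) (2 ^ r.primeFactorsList.length) := by
  intro r
  induction r using Nat.strong_induction_on with
  | _ r ih =>
  intro hr α β γ
  rcases eq_or_ne r 1 with rfl | hr1
  · refine covered_mono (covered_congr (fun x => ?_) covered_univ) (by norm_num)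
    simp [SolSet]
  -- r ≥ 2 : pick the smallest prime factor p, write r = p * m
  · set p := r.minFac with hp_def
    have hp : p.Prime := Nat.minFac_prime hr1
    haveI : Fact p.Prime := ⟨hp⟩
    have hpr : p ∣ r := Nat.minFac_dvd r
    obtain ⟨m, hm⟩ := hpr
    have hm0 : 0 < m := Nat.pos_of_ne_zero (by rintro rfl; simp at hm; omega)
    have hmr : m < r := by
      have h2 : 2 ≤ p := hp.two_le
      calc m < 2 * m := by omega
        _ ≤ p * m := Nat.mul_le_mul_right m h2
        _ = r := hm.symm
    have hΩ : r.primeFactorsList.length = 1 + m.primeFactorsList.length := by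
      rw [hm, omega_mul hp.pos.ne' hm0.ne', Nat.primeFactorsList_prime hp]
      simp
    have hpZ : (p : ℤ) ≠ 0 := by exact_mod_cast hp.pos.ne'
    have hpowm : 2 ^ m.primeFactorsList.length ≤ 2 ^ r.primeFactorsList.length :=
      Nat.pow_le_pow_right (by norm_num) (by omega)
    have hpow2 : 2 ^ m.primeFactorsList.length + 2 ^ m.primeFactorsList.length
        ≤ 2 ^ r.primeFactorsList.length := by
      rw [hΩ, pow_add, pow_one]
      omega
    have hQzmod : ∀ u v : ℤ, (r : ℤ) ∣ α * u ^ 2 + β * u * v + γ * v ^ 2 →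
        (α : ZMod p) * (u : ZMod p) ^ 2 + (β : ZMod p) * u * v + (γ : ZMod p) * v ^ 2 = 0 := by
      intro u v h
      have hpr' : (p : ℤ) ∣ (r : ℤ) := ⟨(m : ℤ), by exact_mod_cast hm⟩
      have := (int_dvd_iff_zmod (p := p) _).1 (hpr'.trans h)
      push_cast at this
      exact this
    by_cases hγ : (p : ℤ) ∣ γ
    · obtain ⟨γ', hγ'⟩ := hγ
      have hγ0 : (γ : ZMod p) = 0 := by rw [hγ']; push_cast; simp
      by_cases hβ : (p : ℤ) ∣ β
      · by_cases hα : (p : ℤ) ∣ α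
        · -- Case 1: p divides all coefficients; divide the form by p
          obtain ⟨α', hα'⟩ := hα
          obtain ⟨β', hβ'⟩ := hβ
          refine covered_mono (covered_congr (fun x => ?_) (ih m hmr hm0 α' β' γ')) hpowm
          simp only [SolSet, Set.mem_setOf_eq]
          rw [hα', hβ', hγ', hm]
          rw [show ((p * m : ℕ) : ℤ) = (p : ℤ) * m by push_cast; ring,
            show (p : ℤ) * α' * x.1 ^ 2 + (p : ℤ) * β' * x.1 * x.2 + (p : ℤ) * γ' * x.2 ^ 2
              = (p : ℤ) * (α' * x.1 ^ 2 + β' * x.1 * x.2 + γ' * x.2 ^ 2) from by ring]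
          exact mul_dvd_mul_iff_left hpZ
        · -- Case 2: p ∤ α, p ∣ β, p ∣ γ : all solutions have p ∣ u; a single line
          have hα0 : (α : ZMod p) ≠ 0 := fun h => hα ((int_dvd_iff_zmod α).2 h)
          have hβ0 : (β : ZMod p) = 0 := (int_dvd_iff_zmod β).1 hβ
          have heq : ∀ x : ℤ × ℤ, x ∈ SolSet α β γ r ↔
              x ∈ (lmap p 0 0 1 '' SolSet (α * p) β γ' m) := by
            rintro ⟨u, v⟩
            rw [hm, ← sol_line2 hp.pos hγ']
            constructor
            · intro hQ
              refine ⟨hQ, ?_⟩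
              have hz := hQzmod u v (by rw [hm]; exact hQ)
              rw [hβ0, hγ0] at hz
              have hu2 : (α : ZMod p) * (u : ZMod p) ^ 2 = 0 := by linear_combination hz
              rcases mul_eq_zero.1 hu2 with h | h
              · exact absurd h hα0
              · exact (int_dvd_iff_zmod u).2 (pow_eq_zero_iff (n := 2) (by norm_num) |>.1 h)
            · exact And.left
          exact covered_mono (covered_congr heq (covered_image _
            (lmap_inj (by simpa using hpZ)) (ih m hmr hm0 (α * p) β γ'))) hpowm
      · -- Case 3: p ∣ γ, p ∤ β : two lines
        have hβ0 : (β : ZMod p) ≠ 0 := fun h => hβ ((int_dvd_iff_zmod β).2 h)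
        set lam : ℤ := (((-α : ZMod p) * (β : ZMod p)⁻¹).val : ℤ) with hlam_def
        have hlamz : ((lam : ℤ) : ZMod p) = (-α : ZMod p) * (β : ZMod p)⁻¹ := val_intCast _
        have hdiv : (p : ℤ) ∣ α + β * lam + γ * lam ^ 2 := by
          rw [int_dvd_iff_zmod]
          push_cast
          rw [hlamz, hγ0]
          have h0 := quad_gamma0_root (α := (α : ZMod p)) hβ0
          linear_combination h0
        obtain ⟨A, hA⟩ := hdiv
        have heq : ∀ x : ℤ × ℤ, x ∈ SolSet α β γ r ↔
            x ∈ ((lmap p 0 0 1 '' SolSet (α * p) β γ' m) ∪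
              (lmap 1 0 lam p '' SolSet A (β + 2 * γ * lam) (γ * p) m)) := by
          rintro ⟨u, v⟩
          rw [Set.mem_union, hm, ← sol_line2 hp.pos hγ', ← sol_line1 hp.pos hA]
          constructor
          · intro hQ
            have hz := hQzmod u v (by rw [hm]; exact hQ)
            rw [hγ0] at hz
            rcases quad_gamma0 (α := (α : ZMod p)) hβ0 (u : ZMod p) (v : ZMod p) (by linear_combination hz) with h | h
            · exact Or.inl ⟨hQ, (int_dvd_iff_zmod u).2 h⟩
            · refine Or.inr ⟨hQ, ?_⟩
              rw [int_dvd_iff_zmod]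
              push_cast
              rw [hlamz]
              linear_combination h
          · rintro (⟨h, _⟩ | ⟨h, _⟩) <;> exact h
        exact covered_mono (covered_congr heq (covered_union
          (covered_image _ (lmap_inj (by simpa using hpZ)) (ih m hmr hm0 (α * p) β γ'))
          (covered_image _ (lmap_inj (by simpa using hpZ))
            (ih m hmr hm0 A (β + 2 * γ * lam) (γ * p))))) hpow2
    · -- Case 4: p ∤ γ
      have hγ0 : (γ : ZMod p) ≠ 0 := fun h => hγ ((int_dvd_iff_zmod γ).2 h)
      by_cases hroot : ∃ ρ : ZMod p,
          (γ : ZMod p) * ρ ^ 2 + (β : ZMod p) * ρ + (α : ZMod p) = 0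
      · -- Case 4a: the quadratic has a root mod p; at most two lines
        obtain ⟨ρ, hρ⟩ := hroot
        set l1 : ℤ := (ρ.val : ℤ) with hl1_def
        set l2 : ℤ := ((-ρ - (β : ZMod p) * (γ : ZMod p)⁻¹).val : ℤ) with hl2_def
        have hl1 : ((l1 : ℤ) : ZMod p) = ρ := val_intCast _
        have hl2 : ((l2 : ℤ) : ZMod p) = -ρ - (β : ZMod p) * (γ : ZMod p)⁻¹ := val_intCast _
        have hd1 : (p : ℤ) ∣ α + β * l1 + γ * l1 ^ 2 := by
          rw [int_dvd_iff_zmod]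
          push_cast
          rw [hl1]
          linear_combination hρ
        have hd2 : (p : ℤ) ∣ α + β * l2 + γ * l2 ^ 2 := by
          rw [int_dvd_iff_zmod]
          push_cast
          rw [hl2]
          linear_combination quad_root2 hγ0 hρ
        obtain ⟨A1, hA1⟩ := hd1
        obtain ⟨A2, hA2⟩ := hd2
        have heq : ∀ x : ℤ × ℤ, x ∈ SolSet α β γ r ↔
            x ∈ ((lmap 1 0 l1 p '' SolSet A1 (β + 2 * γ * l1) (γ * p) m) ∪
              (lmap 1 0 l2 p '' SolSet A2 (β + 2 * γ * l2) (γ * p) m)) := by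
          rintro ⟨u, v⟩
          rw [Set.mem_union, hm, ← sol_line1 hp.pos hA1, ← sol_line1 hp.pos hA2]
          constructor
          · intro hQ
            have hz := hQzmod u v (by rw [hm]; exact hQ)
            rcases quad_cover hγ0 hρ _ _ hz with h | h
            · refine Or.inl ⟨hQ, ?_⟩
              rw [int_dvd_iff_zmod]
              push_cast
              rw [hl1]
              linear_combination h
            · refine Or.inr ⟨hQ, ?_⟩
              rw [int_dvd_iff_zmod]
              push_cast
              rw [hl2]
              linear_combination h
          · rintro (⟨h, _⟩ | ⟨h, _⟩) <;> exact h
        exact covered_mono (covered_congr heq (covered_union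
          (covered_image _ (lmap_inj (by simpa using hpZ))
            (ih m hmr hm0 A1 (β + 2 * γ * l1) (γ * p)))
          (covered_image _ (lmap_inj (by simpa using hpZ))
            (ih m hmr hm0 A2 (β + 2 * γ * l2) (γ * p))))) hpow2
      · -- Case 4b: no root mod p; all solutions are ≡ (0,0) mod p
        push_neg at hroot
        set g := r.gcd (p ^ 2) with hg_def
        have hg0 : 0 < g := Nat.gcd_pos_of_pos_left _ hr
        have hpg : p ∣ g := Nat.dvd_gcd ⟨m, hm⟩ (dvd_pow_self p two_ne_zero)
        have hg2 : 2 ≤ g := le_trans hp.two_le (Nat.le_of_dvd hg0 hpg)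
        set r' := r / g with hr'_def
        have hgr : g ∣ r := Nat.gcd_dvd_left _ _
        have hrr' : r = g * r' := (Nat.mul_div_cancel' hgr).symm
        have hr'0 : 0 < r' := Nat.pos_of_ne_zero (by rintro h; rw [h, mul_zero] at hrr'; omega)
        have hr'r : r' < r := by
          calc r' < 2 * r' := by omega
            _ ≤ g * r' := Nat.mul_le_mul_right r' hg2
            _ = r := hrr'.symm
        have hpow' : 2 ^ r'.primeFactorsList.length ≤ 2 ^ r.primeFactorsList.length := by
          refine Nat.pow_le_pow_right (by norm_num) ?_
          rw [hrr', omega_mul (by omega) hr'0.ne']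
          omega
        have hiff : ∀ z : ℤ, (r : ℤ) ∣ (p : ℤ) ^ 2 * z ↔ (r' : ℤ) ∣ z := by
          intro z
          rw [hr'_def, hg_def]
          exact dvd_sq_iff hr z
        have heq : ∀ x : ℤ × ℤ, x ∈ SolSet α β γ r ↔
            x ∈ (lmap p 0 0 p '' SolSet α β γ r') := by
          rintro ⟨u, v⟩
          constructor
          · intro hQ
            have hz := hQzmod u v hQ
            obtain ⟨hu0, hv0⟩ := quad_noroot hγ0 hroot _ _ hz
            obtain ⟨s, hs⟩ := (int_dvd_iff_zmod u).2 hu0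
            obtain ⟨t, ht⟩ := (int_dvd_iff_zmod v).2 hv0
            refine ⟨(s, t), ?_, ?_⟩
            · rw [mem_SolSet, ← hiff,
                show (p : ℤ) ^ 2 * (α * s ^ 2 + β * s * t + γ * t ^ 2)
                  = α * u ^ 2 + β * u * v + γ * v ^ 2 from by rw [hs, ht]; ring]
              exact hQ
            · rw [lmap_apply, Prod.mk.injEq]
              constructor <;> linarith [hs, ht]
          · rintro ⟨⟨s, t⟩, hst, hst'⟩
            rw [lmap_apply, Prod.mk.injEq] at hst'
            obtain ⟨hu, hv⟩ := hst'
            rw [mem_SolSet,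
              show α * u ^ 2 + β * u * v + γ * v ^ 2
                = (p : ℤ) ^ 2 * (α * s ^ 2 + β * s * t + γ * t ^ 2) from by
                  rw [← hu, ← hv]; ring,
              hiff]
            exact hst
        exact covered_mono (covered_congr heq (covered_image _
          (lmap_inj (by simpa using mul_ne_zero hpZ hpZ)) (ih r' hr'r hr'0 α β γ))) hpow'

/-- Let `Q(u, v) = α u² + β u v + γ v²` be an integral quadratic form and `r` a positive
integer. Then there are `N ≤ 2^{Ω(r)}` rank-two sublattices `Λ₁, …, Λ_N ⊆ ℤ²` such that
`Q(u, v) ≡ 0 (mod r)` if and only if `(u, v)` lies in their union. Here `Ω(r)` is the number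
of prime factors of `r` counted with multiplicity. -/
theorem quadratic_congruence_lattices (α β γ : ℤ) (r : ℕ) (hr : 0 < r) :
    ∃ N : ℕ, N ≤ 2 ^ r.primeFactorsList.length ∧
      ∃ Λ : Fin N → Submodule ℤ (ℤ × ℤ),
        (∀ i, Module.finrank ℤ (Λ i) = 2) ∧
        ∀ u v : ℤ,
          (r : ℤ) ∣ α * u ^ 2 + β * u * v + γ * v ^ 2 ↔ ∃ i, (u, v) ∈ Λ i := by
  obtain ⟨L, hL, hrank, hmem⟩ := main_covered r hr α β γ
  refine ⟨L.length, hL, fun i => L.get i, fun i => hrank _ (L.get_mem i), ?_⟩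
  intro u v
  rw [show ((r : ℤ) ∣ α * u ^ 2 + β * u * v + γ * v ^ 2) = ((u, v) ∈ SolSet α β γ r) from rfl,
    hmem (u, v)]
  constructor
  · rintro ⟨Λ, hΛ, hx⟩
    obtain ⟨i, rfl⟩ := List.mem_iff_get.1 hΛ
    exact ⟨i, hx⟩
  · rintro ⟨i, hx⟩
    exact ⟨L.get i, L.get_mem i, hx⟩
end

section
/- Let k ≥ 2 and let 𝖬 ⊂ ℝ^k be a lattice of full rank k, with dual lattice 𝖬̂ = { u ∈ ℝ^k : uᵀm ∈ ℤ for all m ∈ 𝖬 }. There is a constant C(k), depending only on k, and a finite set H ⊂ 𝖬 with #H ≤ C(k)(1 + det(𝖬)^{1/(k−1)}), such that ‖m‖_∞ ≤ C(k)(1 + det(𝖬)^{1/(k−1)}) for every m ∈ H, and every u ∈ 𝖬̂ with ‖u‖_∞ ≤ 1 satisfies uᵀm = 0 for some nonzero m ∈ H. -/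
set_option maxHeartbeats 1000000

open Matrix MeasureTheory

namespace SiegelAux

variable {k : ℕ}

/-- real cast of an integer vector -/
def cV (v : Fin k → ℤ) : Fin k → ℝ := fun i => (v i : ℝ)

/-- the lattice point associated to `v` -/
def Av (A : Matrix (Fin k) (Fin k) ℝ) (v : Fin k → ℤ) : Fin k → ℝ := A.mulVec (cV v)

lemma cV_sub (v w : Fin k → ℤ) : cV (v - w) = cV v - cV w := by
  funext i; simp [cV]

lemma Av_sub (A : Matrix (Fin k) (Fin k) ℝ) (v w : Fin k → ℤ) :
    Av A (v - w) = Av A v - Av A w := by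
  rw [Av, cV_sub, Matrix.mulVec_sub]; rfl

lemma Av_zero (A : Matrix (Fin k) (Fin k) ℝ) : Av A 0 = 0 := by
  have : cV (0 : Fin k → ℤ) = 0 := by funext i; simp [cV]
  rw [Av, this, Matrix.mulVec_zero]

lemma Av_injective {A : Matrix (Fin k) (Fin k) ℝ} (hA : A.det ≠ 0) :
    Function.Injective (Av A) := by
  intro v w h
  have hinv : A⁻¹ * A = 1 := Matrix.nonsing_inv_mul A (isUnit_iff_ne_zero.mpr hA)
  have h2 : cV v = cV w := by
    have := congrArg (fun x => A⁻¹.mulVec x) h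
    simpa [Av, Matrix.mulVec_mulVec, hinv, Matrix.one_mulVec] using this
  funext i
  have := congrFun h2 i
  simpa [cV] using this

/-- the set of integer vectors whose lattice image lies in the sup-norm ball of radius T -/
def SVset (A : Matrix (Fin k) (Fin k) ℝ) (T : ℝ) : Set (Fin k → ℤ) :=
  {v | ∀ i, |Av A v i| ≤ T}

/-- row-sum type bound -/
noncomputable def rho (A : Matrix (Fin k) (Fin k) ℝ) : ℝ := (∑ i, ∑ j, |A i j|) + 1

lemma rho_pos (A : Matrix (Fin k) (Fin k) ℝ) : 0 < rho A := by
  have : (0:ℝ) ≤ ∑ i, ∑ j, |A i j| := by positivity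
  unfold rho; linarith

lemma mulVec_bound' (A : Matrix (Fin k) (Fin k) ℝ) (y : Fin k → ℝ) (c : ℝ)
    (hy : ∀ j, |y j| ≤ c) (hc : 0 ≤ c) (i : Fin k) :
    |A.mulVec y i| ≤ (rho A - 1) * c := by
  have h1 : |A.mulVec y i| ≤ ∑ j, |A i j| * c := by
    rw [Matrix.mulVec, dotProduct]
    refine le_trans (Finset.abs_sum_le_sum_abs _ _) ?_
    refine Finset.sum_le_sum fun j _ => ?_
    rw [abs_mul]
    exact mul_le_mul_of_nonneg_left (hy j) (abs_nonneg _)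
  refine le_trans h1 ?_
  rw [← Finset.sum_mul]
  refine mul_le_mul_of_nonneg_right ?_ hc
  have : ∑ j, |A i j| ≤ ∑ i', ∑ j, |A i' j| :=
    Finset.single_le_sum (f := fun i' => ∑ j, |A i' j|)
      (fun i' _ => by positivity) (Finset.mem_univ i)
  unfold rho; linarith

lemma SVset_finite (A : Matrix (Fin k) (Fin k) ℝ) (hA : A.det ≠ 0) (T : ℝ) :
    (SVset A T).Finite := by
  classical
  set c : ℝ := rho A⁻¹ * max T 0 with hc
  have hc0 : 0 ≤ c := mul_nonneg (rho_pos A⁻¹).le (le_max_right _ _)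
  refine Set.Finite.subset (Set.finite_Icc (fun _ : Fin k => -(⌈c⌉)) (fun _ => ⌈c⌉)) ?_
  intro v hv
  have hAv : ∀ i, |Av A v i| ≤ max T 0 := fun i => le_trans (hv i) (le_max_left _ _)
  have hinv : A⁻¹ * A = 1 := Matrix.nonsing_inv_mul A (isUnit_iff_ne_zero.mpr hA)
  have hrec : cV v = A⁻¹.mulVec (Av A v) := by
    rw [Av, Matrix.mulVec_mulVec, hinv, Matrix.one_mulVec]
  have hb : ∀ i, |(v i : ℝ)| ≤ c := by
    intro i
    have := mulVec_bound' A⁻¹ (Av A v) (max T 0) hAv (le_max_right _ _) i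
    rw [← hrec] at this
    have h2 : (rho A⁻¹ - 1) * max T 0 ≤ c := by
      rw [hc]
      nlinarith [le_max_right T 0, rho_pos A⁻¹]
    exact le_trans (by exact this) h2
  constructor <;> intro i
  · have h := (abs_le.mp (hb i)).1
    have : (-(⌈c⌉:ℝ)) ≤ (v i : ℝ) := le_trans (by push_cast; linarith [Int.le_ceil c]) h
    exact_mod_cast this
  · have h := (abs_le.mp (hb i)).2
    have : (v i : ℝ) ≤ (⌈c⌉:ℝ) := le_trans h (Int.le_ceil c)
    exact_mod_cast this

noncomputable def SV (A : Matrix (Fin k) (Fin k) ℝ) (hA : A.det ≠ 0) (T : ℝ) :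
    Finset (Fin k → ℤ) := (SVset_finite A hA T).toFinset

lemma mem_SV {A : Matrix (Fin k) (Fin k) ℝ} {hA : A.det ≠ 0} {T : ℝ} {v : Fin k → ℤ} :
    v ∈ SV A hA T ↔ ∀ i, |Av A v i| ≤ T := by
  simp [SV, SVset_finite, SVset, Set.Finite.mem_toFinset]

lemma SV_mono {A : Matrix (Fin k) (Fin k) ℝ} {hA : A.det ≠ 0} {T T' : ℝ} (h : T ≤ T') :
    SV A hA T ⊆ SV A hA T' := by
  intro v hv; rw [mem_SV] at *; exact fun i => le_trans (hv i) h

lemma zero_mem_SV {A : Matrix (Fin k) (Fin k) ℝ} {hA : A.det ≠ 0} {T : ℝ} (hT : 0 ≤ T) :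
    0 ∈ SV A hA T := by
  rw [mem_SV]; intro i; rw [Av_zero]; simpa using hT

lemma tile_volume (A : Matrix (Fin k) (Fin k) ℝ) (v : Fin k → ℤ) :
    volume (⇑(Matrix.toLin' A) '' (Set.univ.pi fun i => Set.Ico ((v i:ℝ)) (v i + 1)))
      = ENNReal.ofReal |A.det| := by
  rw [Measure.addHaar_image_linearMap, LinearMap.det_toLin', volume_pi_pi]
  have : ∀ i : Fin k, volume (Set.Ico ((v i:ℝ)) (v i + 1)) = 1 := by
    intro i; rw [Real.volume_Ico]; simp
  simp [this]

/-- Lemma 2: tiling lower bound for the point count. -/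
lemma tiling_bound (A : Matrix (Fin k) (Fin k) ℝ) (hA : A.det ≠ 0) (R : ℝ)
    (hR : rho A ≤ R) :
    ENNReal.ofReal ((2*(R - rho A))^k) ≤ ((SV A hA R).card : ENNReal) * ENNReal.ofReal |A.det| := by
  classical
  have hρ := rho_pos A
  have hsub : (Set.univ.pi fun _ : Fin k => Set.Icc (-(R - rho A)) (R - rho A)) ⊆
      ⋃ v ∈ SV A hA R,
        (⇑(Matrix.toLin' A) '' (Set.univ.pi fun i => Set.Ico ((v i:ℝ)) (v i + 1))) := by
    intro x hx
    have hxmem : ∀ i, |x i| ≤ R - rho A := by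
      intro i
      have := hx i (Set.mem_univ i)
      exact abs_le.mpr this
    set y := A⁻¹.mulVec x with hy
    set v : Fin k → ℤ := fun i => ⌊y i⌋ with hv
    have hxy : A.mulVec y = x := by
      rw [hy, Matrix.mulVec_mulVec,
        Matrix.mul_nonsing_inv A (isUnit_iff_ne_zero.mpr hA), Matrix.one_mulVec]
    have hd : ∀ j, |y j - (v j:ℝ)| ≤ 1 := by
      intro j
      rw [abs_le]
      constructor
      · linarith [Int.floor_le (y j)]
      · linarith [Int.lt_floor_add_one (y j)]
    have hvmem : v ∈ SV A hA R := by
      rw [mem_SV]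
      intro i
      have hsplit : Av A v i = x i - A.mulVec (y - cV v) i := by
        have : A.mulVec (y - cV v) = A.mulVec y - A.mulVec (cV v) := Matrix.mulVec_sub A y (cV v)
        rw [Av]
        rw [this, hxy]
        ring_nf
        simp
      have hb := mulVec_bound' A (y - cV v) 1 (fun j => by simpa [cV] using hd j) zero_le_one i
      rw [hsplit]
      have := abs_sub_abs_le_abs_sub (x i) (A.mulVec (y - cV v) i)
      have h3 : |x i - A.mulVec (y - cV v) i| ≤ |x i| + |A.mulVec (y - cV v) i| := abs_sub _ _
      have := hxmem i
      nlinarith [abs_nonneg (A.mulVec (y - cV v) i)]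
    refine Set.mem_biUnion hvmem ?_
    refine ⟨y, ?_, ?_⟩
    · intro i _
      constructor
      · exact Int.floor_le (y i)
      · exact Int.lt_floor_add_one (y i)
    · rw [Matrix.toLin'_apply, hxy]
  have hvol : volume (Set.univ.pi fun _ : Fin k => Set.Icc (-(R - rho A)) (R - rho A))
      = ENNReal.ofReal ((2*(R - rho A))^k) := by
    rw [volume_pi_pi]
    have : volume (Set.Icc (-(R - rho A)) (R - rho A)) = ENNReal.ofReal (2*(R - rho A)) := by
      rw [Real.volume_Icc]; ring_nf
    rw [this, Finset.prod_const, Finset.card_univ, Fintype.card_fin,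
      ← ENNReal.ofReal_pow (by linarith)]
  calc ENNReal.ofReal ((2*(R - rho A))^k)
      = volume (Set.univ.pi fun _ : Fin k => Set.Icc (-(R - rho A)) (R - rho A)) := hvol.symm
    _ ≤ volume (⋃ v ∈ SV A hA R,
        (⇑(Matrix.toLin' A) '' (Set.univ.pi fun i => Set.Ico ((v i:ℝ)) (v i + 1)))) :=
        measure_mono hsub
    _ ≤ ∑ v ∈ SV A hA R, volume
        (⇑(Matrix.toLin' A) '' (Set.univ.pi fun i => Set.Ico ((v i:ℝ)) (v i + 1))) :=
        measure_biUnion_finset_le _ _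
    _ = ((SV A hA R).card : ENNReal) * ENNReal.ofReal |A.det| := by
        rw [Finset.sum_congr rfl (fun v _ => tile_volume A v), Finset.sum_const, nsmul_eq_mul]

/-- multiplicity counting: if no point is in more than `card SV T` of the cubes around
lattice points in the `R`-ball, then we get a volume bound. -/
lemma multiplicity_bound (A : Matrix (Fin k) (Fin k) ℝ) (hA : A.det ≠ 0)
    (N : ℕ) (T R : ℝ) (hT : 0 < T) (hR : 0 < R) (hcard : (SV A hA T).card ≤ N) :
    ((SV A hA R).card : ENNReal) * ENNReal.ofReal (T^k)
      ≤ (N : ENNReal) * ENNReal.ofReal ((2*R+T)^k) := by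
  classical
  set sv : (Fin k → ℤ) → Set (Fin k → ℝ) :=
    fun v => Set.univ.pi fun i => Set.Icc (Av A v i - T/2) (Av A v i + T/2) with hsv
  have hmeas : ∀ v, MeasurableSet (sv v) :=
    fun v => MeasurableSet.univ_pi fun i => measurableSet_Icc
  set big : Set (Fin k → ℝ) :=
    Set.univ.pi fun _ : Fin k => Set.Icc (-(R+T/2)) (R+T/2) with hbig
  have hbigmeas : MeasurableSet big := MeasurableSet.univ_pi fun i => measurableSet_Icc
  have hvolsv : ∀ v, volume (sv v) = ENNReal.ofReal (T^k) := by
    intro v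
    rw [hsv, volume_pi_pi]
    have : ∀ i : Fin k, volume (Set.Icc (Av A v i - T/2) (Av A v i + T/2))
        = ENNReal.ofReal T := by
      intro i; rw [Real.volume_Icc]; ring_nf
    rw [Finset.prod_congr rfl (fun i _ => this i), Finset.prod_const, Finset.card_univ,
      Fintype.card_fin, ← ENNReal.ofReal_pow hT.le]
  have hvolbig : volume big = ENNReal.ofReal ((2*R+T)^k) := by
    rw [hbig, volume_pi_pi]
    have : volume (Set.Icc (-(R+T/2)) (R+T/2)) = ENNReal.ofReal (2*R+T) := by
      rw [Real.volume_Icc]; ring_nf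
    rw [this, Finset.prod_const, Finset.card_univ, Fintype.card_fin,
      ← ENNReal.ofReal_pow (by linarith)]
  have hpoint : ∀ x : Fin k → ℝ,
      (∑ v ∈ SV A hA R, (sv v).indicator (fun _ => (1:ENNReal)) x)
        ≤ (N : ENNReal) * big.indicator (fun _ => (1:ENNReal)) x := by
    intro x
    have hmem : ∀ v, x ∈ sv v ↔ ∀ i, |x i - Av A v i| ≤ T/2 := by
      intro v
      constructor
      · intro hx i
        have := hx i (Set.mem_univ i)
        rw [abs_le]; constructor <;> [skip; skip] <;> simp at this ⊢ <;> linarith [this.1, this.2]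
      · intro hx i _
        have := abs_le.mp (hx i)
        constructor <;> linarith [this.1, this.2]
    set F := (SV A hA R).filter (fun v => x ∈ sv v) with hF
    have hsum : (∑ v ∈ SV A hA R, (sv v).indicator (fun _ => (1:ENNReal)) x)
        = (F.card : ENNReal) := by
      rw [hF]
      rw [Finset.sum_congr rfl (fun v _ => by
        rw [Set.indicator_apply] : ∀ v ∈ SV A hA R, (sv v).indicator (fun _ => (1:ENNReal)) x
          = if x ∈ sv v then 1 else 0)]
      exact Finset.sum_boole _ _
    rw [hsum]
    rcases Finset.eq_empty_or_nonempty F with hFe | ⟨v₀, hv₀⟩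
    · rw [hFe]; simp
    · have hv₀R : v₀ ∈ SV A hA R := (Finset.mem_filter.mp hv₀).1
      have hv₀x : x ∈ sv v₀ := (Finset.mem_filter.mp hv₀).2
      have hcardF : F.card ≤ N := by
        refine le_trans (Finset.card_le_card_of_injOn (fun v => v - v₀) ?_ ?_) hcard
        · intro v hv
          have hvx : x ∈ sv v := (Finset.mem_filter.mp hv).2
          show v - v₀ ∈ SV A hA T
          rw [mem_SV]
          intro i
          have h1 := (hmem v).mp hvx i
          have h2 := (hmem v₀).mp hv₀x i
          rw [Av_sub]
          have h3 : |Av A v i - Av A v₀ i| ≤ |Av A v i - x i| + |x i - Av A v₀ i| :=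
            abs_sub_le _ _ _
          have h4 : |Av A v i - x i| = |x i - Av A v i| := abs_sub_comm _ _
          simp only [Pi.sub_apply]
          linarith
        · intro a _ b _ hab
          have := congrArg (fun w => w + v₀) hab
          simpa using this
      have hxbig : x ∈ big := by
        intro i _
        have h2 := abs_le.mp ((hmem v₀).mp hv₀x i)
        have h3 := abs_le.mp ((mem_SV.mp hv₀R) i)
        constructor
        · linarith [h2.1, h3.1]
        · linarith [h2.2, h3.2]
      rw [Set.indicator_of_mem hxbig, mul_one]
      exact_mod_cast Nat.cast_le.mpr hcardF
  have hint : (∑ v ∈ SV A hA R, volume (sv v))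
      ≤ (N : ENNReal) * volume big := by
    calc (∑ v ∈ SV A hA R, volume (sv v))
        = ∑ v ∈ SV A hA R, ∫⁻ x, (sv v).indicator (fun _ => (1:ENNReal)) x := by
          refine Finset.sum_congr rfl fun v _ => ?_
          rw [lintegral_indicator (hmeas v), setLIntegral_const, one_mul]
      _ = ∫⁻ x, ∑ v ∈ SV A hA R, (sv v).indicator (fun _ => (1:ENNReal)) x := by
          rw [lintegral_finset_sum]
          exact fun v _ => (measurable_const.indicator (hmeas v))
      _ ≤ ∫⁻ x, (N : ENNReal) * big.indicator (fun _ => (1:ENNReal)) x :=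
          lintegral_mono hpoint
      _ = (N : ENNReal) * volume big := by
          rw [lintegral_const_mul _ (measurable_const.indicator hbigmeas),
            lintegral_indicator hbigmeas, setLIntegral_const, one_mul]
  rw [Finset.sum_congr rfl (fun v _ => hvolsv v), Finset.sum_const, nsmul_eq_mul, hvolbig]
    at hint
  exact hint

/-- Lemma 3: multiplicity pigeonhole (van der Corput style lower bound). -/
lemma count_lower (A : Matrix (Fin k) (Fin k) ℝ) (hA : A.det ≠ 0) (hk : 1 ≤ k)
    (N : ℕ) (T : ℝ) (hT : 0 < T) (h : (N:ℝ) * |A.det| < T^k) :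
    N + 1 ≤ (SV A hA T).card := by
  by_contra hcon
  push_neg at hcon
  have hcard : (SV A hA T).card ≤ N := by omega
  set D := |A.det| with hD
  have hD0 : 0 < D := abs_pos.mpr hA
  have hTk : (0:ℝ) < T^k := pow_pos hT k
  rcases Nat.eq_zero_or_pos N with h0 | hN1
  · rw [h0] at hcard
    have : 0 ∈ SV A hA T := zero_mem_SV hT.le
    have := Finset.card_pos.mpr ⟨0, this⟩
    omega
  have hN0 : (0:ℝ) < (N:ℝ) := by exact_mod_cast hN1
  have hk1 : (1:ℝ) ≤ (k:ℝ) := by exact_mod_cast hk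
  set r : ℝ := (N:ℝ) * D / T^k with hr
  have hr0 : 0 < r := div_pos (mul_pos hN0 hD0) hTk
  have hr1 : r < 1 := by
    rw [hr, div_lt_one hTk]; exact h
  have hk0 : (0:ℝ) < k := by exact_mod_cast hk
  set x : ℝ := (1-r)/(2*k) with hx
  have hx0 : 0 < x := div_pos (by linarith) (by positivity)
  have hxhalf : x ≤ 1/2 := by
    rw [hx, div_le_iff₀ (by positivity)]
    nlinarith [hr0, hk1]
  have hρ := rho_pos A
  set R : ℝ := (rho A + T/2)/x with hR
  have hR0 : 0 < R := div_pos (by linarith) hx0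
  have hRρ : rho A ≤ R := by
    rw [hR, le_div_iff₀ hx0]
    nlinarith
  have hxR : x * R = rho A + T/2 := by
    rw [hR]
    field_simp
  -- combine tiling bound and multiplicity bound
  have h1 := tiling_bound A hA R hRρ
  have h2 := multiplicity_bound A hA N T R hT hR0 hcard
  have hreal : (2*(R - rho A))^k * T^k ≤ (N:ℝ) * ((2*R+T)^k * D) := by
    have hchain : ENNReal.ofReal ((2*(R - rho A))^k * T^k)
        ≤ ENNReal.ofReal ((N:ℝ) * ((2*R+T)^k * D)) := by
      rw [ENNReal.ofReal_mul (pow_nonneg (by linarith) k)]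
      calc ENNReal.ofReal ((2*(R - rho A))^k) * ENNReal.ofReal (T^k)
          ≤ (((SV A hA R).card : ENNReal) * ENNReal.ofReal D) * ENNReal.ofReal (T^k) :=
            mul_le_mul_left h1 _
        _ = (((SV A hA R).card : ENNReal) * ENNReal.ofReal (T^k)) * ENNReal.ofReal D :=
            mul_right_comm _ _ _
        _ ≤ ((N : ENNReal) * ENNReal.ofReal ((2*R+T)^k)) * ENNReal.ofReal D :=
            mul_le_mul_left h2 _
        _ = ENNReal.ofReal ((N:ℝ) * ((2*R+T)^k * D)) := by
            rw [ENNReal.ofReal_mul (by positivity), ENNReal.ofReal_mul (by positivity),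
              ENNReal.ofReal_natCast, mul_assoc]
    rw [ENNReal.ofReal_le_ofReal_iff (by positivity)] at hchain
    exact hchain
  -- contradiction via the choice of R
  have hNDr : (N:ℝ) * D = r * T^k := by
    rw [hr]; field_simp
  have hkey : r * (2*R+T)^k < (2*(R - rho A))^k := by
    have hgeom : (2*R+T)*(1-x) ≤ 2*(R - rho A) := by
      nlinarith [hxR, hx0, hT]
    have hbern : 1 - (k:ℝ)*x ≤ (1-x)^k := by
      have := one_add_mul_le_pow (a := -x) (by linarith) k
      calc 1 - (k:ℝ)*x = 1 + (k:ℝ)*(-x) := by ring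
        _ ≤ (1 + -x)^k := this
        _ = (1-x)^k := by ring_nf
    have hval : 1 - (k:ℝ)*x = (1+r)/2 := by
      rw [hx]; field_simp; ring
    have hpow : ((2*R+T)*(1-x))^k ≤ (2*(R - rho A))^k := by
      refine pow_le_pow_left₀ ?_ hgeom k
      nlinarith
    have hsplit : ((2*R+T)*(1-x))^k = (2*R+T)^k * (1-x)^k := mul_pow _ _ _
    have h2RT : (0:ℝ) < (2*R+T)^k := by positivity
    calc r * (2*R+T)^k < ((1+r)/2) * (2*R+T)^k :=
          mul_lt_mul_of_pos_right (by linarith) h2RT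
      _ = (2*R+T)^k * (1 - (k:ℝ)*x) := by rw [hval]; ring
      _ ≤ (2*R+T)^k * (1-x)^k := by
          refine mul_le_mul_of_nonneg_left hbern (by positivity)
      _ = ((2*R+T)*(1-x))^k := (mul_pow _ _ _).symm
      _ ≤ (2*(R - rho A))^k := hpow
  have : (N:ℝ) * ((2*R+T)^k * D) = r * (2*R+T)^k * T^k := by
    rw [← mul_assoc, mul_comm ((N:ℝ)) _, mul_assoc, hNDr]; ring
  rw [this] at hreal
  nlinarith [hkey, hTk]

/-- covering/doubling bound -/
lemma count_doubling (A : Matrix (Fin k) (Fin k) ℝ) (hA : A.det ≠ 0) (T : ℝ) (hT : 0 < T) :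
    ((SV A hA (2*T)).card : ℕ) ≤ 9^k * (SV A hA (T/2)).card := by
  classical
  have hT2 : (0:ℝ) < T/2 := by linarith
  set g : (Fin k → ℤ) → (Fin k → ℤ) := fun v i => ⌊Av A v i / (T/2)⌋ with hg
  have hfiber : ∀ b ∈ Finset.image g (SV A hA (2*T)),
      ((SV A hA (2*T)).filter (fun v => g v = b)).card ≤ (SV A hA (T/2)).card := by
    intro b hb
    rcases Finset.eq_empty_or_nonempty ((SV A hA (2*T)).filter (fun v => g v = b))
      with he | ⟨v₀, hv₀⟩
    · rw [he]; simp
    · refine Finset.card_le_card_of_injOn (fun v => v - v₀) ?_ ?_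
      · intro v hv
        have hgv : g v = b := (Finset.mem_filter.mp hv).2
        have hgv₀ : g v₀ = b := (Finset.mem_filter.mp hv₀).2
        show v - v₀ ∈ SV A hA (T/2)
        rw [mem_SV]
        intro i
        have heq : ⌊Av A v i / (T/2)⌋ = ⌊Av A v₀ i / (T/2)⌋ :=
          (congrFun hgv i).trans (congrFun hgv₀ i).symm
        have h1 : |Av A v i / (T/2) - Av A v₀ i / (T/2)| < 1 := by
          rw [abs_lt]
          constructor
          · have := Int.floor_le (Av A v i / (T/2))
            have := Int.lt_floor_add_one (Av A v₀ i / (T/2))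
            rw [heq] at *
            push_cast at *
            linarith
          · have := Int.floor_le (Av A v₀ i / (T/2))
            have := Int.lt_floor_add_one (Av A v i / (T/2))
            rw [heq] at *
            push_cast at *
            linarith
        rw [Av_sub]
        simp only [Pi.sub_apply]
        rw [div_sub_div_same, abs_div, abs_of_pos hT2, div_lt_one hT2] at h1
        linarith
      · intro a _ b' _ hab
        have := congrArg (fun w => w + v₀) hab
        simpa using this
  have hmain := Finset.card_le_mul_card_image (f := g) (SV A hA (2*T))
    ((SV A hA (T/2)).card) hfiber
  have himg : (Finset.image g (SV A hA (2*T))).card ≤ 9^k := by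
    have hsub : Finset.image g (SV A hA (2*T)) ⊆
        Finset.Icc (fun _ : Fin k => (-4:ℤ)) (fun _ => 4) := by
      intro b hb
      rcases Finset.mem_image.mp hb with ⟨v, hv, hgv⟩
      rw [Finset.mem_Icc]
      have hAv := mem_SV.mp hv
      constructor <;> intro i <;> rw [← hgv, hg]
      · have h1 : (-4:ℝ) ≤ Av A v i / (T/2) := by
          rw [le_div_iff₀ hT2]
          have := (abs_le.mp (hAv i)).1
          linarith
        exact_mod_cast Int.le_floor.mpr (by exact_mod_cast h1)
      · have h1 : Av A v i / (T/2) ≤ 4 := by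
          rw [div_le_iff₀ hT2]
          have := (abs_le.mp (hAv i)).2
          linarith
        calc ⌊Av A v i / (T/2)⌋ ≤ ⌊(4:ℝ)⌋ := Int.floor_le_floor h1
          _ = 4 := by norm_num
    calc (Finset.image g (SV A hA (2*T))).card
        ≤ (Finset.Icc (fun _ : Fin k => (-4:ℤ)) (fun _ => 4)).card :=
          Finset.card_le_card hsub
      _ = 9^k := by
          rw [Pi.card_Icc]
          simp [Int.card_Icc]
  calc (SV A hA (2*T)).card ≤ (SV A hA (T/2)).card * (Finset.image g (SV A hA (2*T))).card :=
        hmain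
    _ ≤ (SV A hA (T/2)).card * 9^k := Nat.mul_le_mul_left _ himg
    _ = 9^k * (SV A hA (T/2)).card := Nat.mul_comm _ _

end SiegelAux

open SiegelAux

/-- Siegel's lemma / projective slicing. Let `k ≥ 2` and let `𝖬 ⊂ ℝ^k` be a full-rank lattice,
given as the image of `ℤ^k` under an invertible matrix `A`, so that `det 𝖬 = |det A|`. There
is a constant `C(k)` and a finite set `H ⊂ 𝖬` with `#H ≤ C(k)(1 + det(𝖬)^{1/(k-1)})`, such
that `‖m‖_∞ ≤ C(k)(1 + det(𝖬)^{1/(k-1)})` for every `m ∈ H`, and every `u` in the dual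
lattice `𝖬̂` with `‖u‖_∞ ≤ 1` is orthogonal to some nonzero element of `H`. -/
theorem siegel_projective_slicing (k : ℕ) (hk : 2 ≤ k) :
    ∃ C : ℝ, 0 < C ∧ ∀ A : Matrix (Fin k) (Fin k) ℝ, A.det ≠ 0 →
      ∃ H : Finset (Fin k → ℝ),
        (∀ m ∈ H, ∃ v : Fin k → ℤ, m = A.mulVec fun i => (v i : ℝ)) ∧
        (H.card : ℝ) ≤ C * (1 + |A.det| ^ ((1 : ℝ) / ((k : ℝ) - 1))) ∧
        (∀ m ∈ H, ∀ i, |m i| ≤ C * (1 + |A.det| ^ ((1 : ℝ) / ((k : ℝ) - 1)))) ∧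
        ∀ u : Fin k → ℝ,
          (∀ v : Fin k → ℤ, ∃ z : ℤ, (u ⬝ᵥ A.mulVec fun i => (v i : ℝ)) = (z : ℝ)) →
          (∀ i, |u i| ≤ 1) →
          ∃ m ∈ H, m ≠ 0 ∧ u ⬝ᵥ m = 0 := by
  classical
  have hk1 : 1 ≤ k := by omega
  have hkR : (2:ℝ) ≤ (k:ℝ) := by exact_mod_cast hk
  set Ck : ℝ := (9:ℝ)^k * ((k:ℝ)+1) * (4*(k:ℝ)+2) with hCk
  have hCk0 : 0 < Ck := by positivity
  refine ⟨Ck, hCk0, ?_⟩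
  intro A hA
  set D := |A.det| with hD
  have hD0 : 0 < D := abs_pos.mpr hA
  set E := D ^ ((1:ℝ)/((k:ℝ)-1)) with hE
  have hE0 : 0 < E := Real.rpow_pos_of_pos hD0 _
  have hkm1 : ((k-1 : ℕ) : ℝ) = (k:ℝ) - 1 := by
    push_cast [Nat.cast_sub hk1]
    ring
  have hkm1ne : ((k:ℝ) - 1) ≠ 0 := by linarith
  have hEpow : E ^ (k-1) = D := by
    rw [hE, ← Real.rpow_natCast (D ^ ((1:ℝ)/((k:ℝ)-1))) (k-1), ← Real.rpow_mul hD0.le,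
      hkm1, one_div, inv_mul_cancel₀ hkm1ne, Real.rpow_one]
  set B₀ : ℝ := (4*(k:ℝ)+2) * (1+E) with hB
  have hs1 : (1:ℝ) ≤ 1 + E := by linarith
  have hc1 : (1:ℝ) ≤ 4*(k:ℝ)+2 := by linarith
  have hB0 : 0 < B₀ := by positivity
  have hB1 : 1 ≤ B₀ := by nlinarith
  -- the key numerical inequality
  have hkey : (2*(k:ℝ)*B₀+1) * D < B₀ ^ k := by
    have hDs : D < (1+E)^(k-1) := by
      rw [← hEpow]
      refine pow_lt_pow_left₀ (by linarith) hE0.le ?_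
      omega
    have h1 : (2*(k:ℝ)*B₀+1) ≤ (2*(k:ℝ)*(4*(k:ℝ)+2)+1) * (1+E) := by
      rw [hB]
      nlinarith
    have h2 : (2*(k:ℝ)*(4*(k:ℝ)+2)+1) ≤ (4*(k:ℝ)+2)^k := by
      calc (2*(k:ℝ)*(4*(k:ℝ)+2)+1) ≤ (4*(k:ℝ)+2)^2 := by nlinarith
        _ ≤ (4*(k:ℝ)+2)^k := pow_le_pow_right₀ (by linarith) hk
    have h3 : (1+E) * (1+E)^(k-1) = (1+E)^k := by
      rw [← pow_succ']
      congr 1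
      omega
    calc (2*(k:ℝ)*B₀+1) * D ≤ ((2*(k:ℝ)*(4*(k:ℝ)+2)+1) * (1+E)) * D := by
          exact mul_le_mul_of_nonneg_right h1 hD0.le
      _ < ((2*(k:ℝ)*(4*(k:ℝ)+2)+1) * (1+E)) * (1+E)^(k-1) := by
          refine mul_lt_mul_of_pos_left hDs ?_
          positivity
      _ = (2*(k:ℝ)*(4*(k:ℝ)+2)+1) * (1+E)^k := by rw [mul_assoc, h3]
      _ ≤ (4*(k:ℝ)+2)^k * (1+E)^k := by
          exact mul_le_mul_of_nonneg_right h2 (by positivity)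
      _ = B₀ ^ k := by rw [hB, mul_pow]
  -- base point count at radius B₀
  have hP0 : 2*(k:ℝ)*B₀+1 < ((SV A hA B₀).card : ℝ) := by
    set N : ℕ := (⌊2*(k:ℝ)*B₀⌋).toNat + 1 with hN
    have hfl0 : (0:ℤ) ≤ ⌊2*(k:ℝ)*B₀⌋ := Int.floor_nonneg.mpr (by positivity)
    have hNZ : (N:ℤ) = ⌊2*(k:ℝ)*B₀⌋ + 1 := by
      rw [hN]
      push_cast
      omega
    have hNval : (N:ℝ) = (⌊2*(k:ℝ)*B₀⌋ : ℝ) + 1 := by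
      exact_mod_cast congrArg (fun z : ℤ => (z:ℝ)) hNZ
    have hcond : (N:ℝ) * D < B₀^k := by
      have hNle : (N:ℝ) ≤ 2*(k:ℝ)*B₀+1 := by
        rw [hNval]
        have := Int.floor_le (2*(k:ℝ)*B₀)
        linarith
      calc (N:ℝ)*D ≤ (2*(k:ℝ)*B₀+1)*D := mul_le_mul_of_nonneg_right hNle hD0.le
        _ < B₀^k := hkey
    have hcl := count_lower A hA hk1 N B₀ hB0 hcond
    have hcast : ((N:ℕ):ℝ) + 1 ≤ ((SV A hA B₀).card : ℝ) := by
      exact_mod_cast hcl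
    have := Int.lt_floor_add_one (2*(k:ℝ)*B₀)
    rw [hNval] at hcast
    linarith
  -- the predicate for the dyadic search
  set P : ℕ → Prop := fun j => 2*(k:ℝ)*(B₀/2^j)+1 < ((SV A hA (B₀/2^j)).card : ℝ) with hP
  have hP0' : P 0 := by simpa [hP] using hP0
  -- existence of a failing index
  have hex : ∃ j, ¬ P j := by
    have hcard2 : 1 < (SV A hA B₀).card := by
      by_contra hc
      push_neg at hc
      have : ((SV A hA B₀).card : ℝ) ≤ 1 := by exact_mod_cast hc
      nlinarith
    obtain ⟨v₁, hv₁mem, hv₁ne⟩ := Finset.exists_mem_ne hcard2 0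
    have hne : (Finset.univ : Finset (Fin k)).Nonempty := ⟨⟨0, by omega⟩, Finset.mem_univ _⟩
    set gmax : (Fin k → ℤ) → ℝ := fun v => Finset.univ.sup' hne (fun i => |Av A v i|) with hgmax
    set S₁ := (SV A hA B₀).erase 0 with hS₁
    have hS₁ne : S₁.Nonempty := ⟨v₁, Finset.mem_erase.mpr ⟨hv₁ne, hv₁mem⟩⟩
    set δ : ℝ := S₁.inf' hS₁ne gmax with hδ
    have hδ0 : 0 < δ := by
      rw [hδ, Finset.lt_inf'_iff]
      intro v hv
      have hvne : v ≠ 0 := (Finset.mem_erase.mp hv).1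
      have hAvne : Av A v ≠ 0 := by
        intro hcon
        exact hvne (Av_injective hA (by rw [hcon, Av_zero]))
      obtain ⟨i, hi⟩ := Function.ne_iff.mp hAvne
      have hgi : |Av A v i| ≤ gmax v :=
        Finset.le_sup' (fun j => |Av A v j|) (Finset.mem_univ i)
      have habs : 0 < |Av A v i| := abs_pos.mpr (by simpa using hi)
      linarith
    obtain ⟨j, hj⟩ := pow_unbounded_of_one_lt (B₀/δ) (one_lt_two (α := ℝ))
    refine ⟨j, ?_⟩
    have hTj : B₀/2^j < δ := by
      rw [div_lt_iff₀ (by positivity)] at hj ⊢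
      calc B₀ < δ * 2^j := by linarith [hj]
        _ = δ * 2^j := rfl
    have h2j1 : (1:ℝ) ≤ 2^j := one_le_pow₀ (by norm_num : (1:ℝ) ≤ 2)
    have hTjB : B₀/2^j ≤ B₀ := by
      rw [div_le_iff₀ (by positivity)]
      nlinarith
    have hTj0 : 0 < B₀/2^j := by positivity
    have hcard1 : (SV A hA (B₀/2^j)).card ≤ 1 := by
      rw [Finset.card_le_one]
      have hzero : ∀ v ∈ SV A hA (B₀/2^j), v = 0 := by
        intro v hv
        by_contra hvne
        have hvB : v ∈ S₁ := by
          rw [hS₁, Finset.mem_erase]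
          exact ⟨hvne, SV_mono hTjB hv⟩
        have h1 : δ ≤ gmax v := Finset.inf'_le _ hvB
        have h2 : gmax v ≤ B₀/2^j := by
          rw [hgmax]
          refine Finset.sup'_le _ _ fun i _ => ?_
          exact mem_SV.mp hv i
        linarith
      intro a ha b hb
      rw [hzero a ha, hzero b hb]
    rw [hP]
    push_neg
    have : ((SV A hA (B₀/2^j)).card : ℝ) ≤ 1 := by exact_mod_cast hcard1
    nlinarith
  -- find the first failing index
  set j₀ := Nat.find hex with hj₀
  have hj₀spec : ¬ P j₀ := Nat.find_spec hex
  have hj₀pos : j₀ ≠ 0 := by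
    intro hcon
    rw [hcon] at hj₀spec
    exact hj₀spec hP0'
  set j' := j₀ - 1 with hj'
  have hPj' : P j' := by
    by_contra hcon
    have h1 : Nat.find hex ≤ j' := Nat.find_le hcon
    rw [← hj₀] at h1
    omega
  set T := B₀/2^j' with hT
  have h2j' : (0:ℝ) < 2^j' := by positivity
  have hT0 : 0 < T := by positivity
  have h2j'1 : (1:ℝ) ≤ 2^j' := one_le_pow₀ (by norm_num : (1:ℝ) ≤ 2)
  have hTB : T ≤ B₀ := by
    rw [hT, div_le_iff₀ h2j']
    nlinarith
  have hhalf : B₀/2^j₀ = T/2 := by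
    rw [hT]
    have : j₀ = j' + 1 := by omega
    rw [this, pow_succ]
    field_simp
  have hPT : 2*(k:ℝ)*T+1 < ((SV A hA T).card : ℝ) := hPj'
  have hsmall : ((SV A hA (T/2)).card : ℝ) ≤ (k:ℝ)*T+1 := by
    have h' : ¬ (2*(k:ℝ)*(B₀/2^j₀)+1 < ((SV A hA (B₀/2^j₀)).card : ℝ)) := hj₀spec
    push_neg at h'
    rw [hhalf] at h'
    calc ((SV A hA (T/2)).card : ℝ) ≤ 2*(k:ℝ)*(T/2)+1 := h'
      _ = (k:ℝ)*T+1 := by ring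
  -- the set H
  set Hs : Finset (Fin k → ℝ) :=
    ((SV A hA (2*T)).erase 0).image (fun v => A.mulVec (fun i => (v i : ℝ))) with hHs
  refine ⟨Hs, ?_, ?_, ?_, ?_⟩
  · intro m hm
    obtain ⟨v, _, hv⟩ := Finset.mem_image.mp hm
    exact ⟨v, hv.symm⟩
  · -- cardinality bound
    have hc1' : Hs.card ≤ (SV A hA (2*T)).card := by
      calc Hs.card ≤ ((SV A hA (2*T)).erase 0).card := Finset.card_image_le
        _ ≤ (SV A hA (2*T)).card := Finset.card_erase_le
    have hc2 : (SV A hA (2*T)).card ≤ 9^k * (SV A hA (T/2)).card :=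
      count_doubling A hA T hT0
    have hreal : (Hs.card : ℝ) ≤ (9:ℝ)^k * ((k:ℝ)*T+1) := by
      have h9 : ((9^k * (SV A hA (T/2)).card : ℕ) : ℝ)
          = (9:ℝ)^k * ((SV A hA (T/2)).card : ℝ) := by push_cast; ring
      have := le_trans hc1' hc2
      have hcast : (Hs.card : ℝ) ≤ (9:ℝ)^k * ((SV A hA (T/2)).card : ℝ) := by
        rw [← h9]
        exact_mod_cast this
      calc (Hs.card : ℝ) ≤ (9:ℝ)^k * ((SV A hA (T/2)).card : ℝ) := hcast
        _ ≤ (9:ℝ)^k * ((k:ℝ)*T+1) := by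
            refine mul_le_mul_of_nonneg_left hsmall (by positivity)
    calc (Hs.card : ℝ) ≤ (9:ℝ)^k * ((k:ℝ)*T+1) := hreal
      _ ≤ (9:ℝ)^k * ((k:ℝ)*B₀+1) := by
          refine mul_le_mul_of_nonneg_left ?_ (by positivity)
          nlinarith
      _ ≤ (9:ℝ)^k * (((k:ℝ)+1)*B₀) := by
          refine mul_le_mul_of_nonneg_left ?_ (by positivity)
          nlinarith
      _ = Ck * (1+E) := by rw [hCk, hB]; ring
  · -- norm bound
    intro m hm i
    obtain ⟨v, hv, hveq⟩ := Finset.mem_image.mp hm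
    have hvmem : v ∈ SV A hA (2*T) := Finset.mem_of_mem_erase hv
    have := mem_SV.mp hvmem i
    rw [← hveq]
    have hAvm : Av A v i = A.mulVec (fun i => (v i : ℝ)) i := rfl
    rw [← hAvm]
    calc |Av A v i| ≤ 2*T := this
      _ ≤ 2*B₀ := by linarith
      _ ≤ Ck * (1+E) := by
          rw [hCk, hB]
          have h9k : (2:ℝ) ≤ (9:ℝ)^k * ((k:ℝ)+1) := by
            have : (1:ℝ) ≤ (9:ℝ)^k := one_le_pow₀ (by norm_num)
            nlinarith
          nlinarith
  · -- coverage
    intro u hu hub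
    set M : ℤ := ⌊(k:ℝ)*T⌋ with hM
    have hM0 : (0:ℤ) ≤ M := Int.floor_nonneg.mpr (by positivity)
    set φ : (Fin k → ℤ) → ℤ := fun v => Classical.choose (hu v) with hφ
    have hφspec : ∀ v, (u ⬝ᵥ A.mulVec fun i => ((v i : ℝ))) = ((φ v : ℤ) : ℝ) :=
      fun v => Classical.choose_spec (hu v)
    have hmaps : ∀ v ∈ SV A hA T, φ v ∈ Finset.Icc (-M) M := by
      intro v hv
      have hbound : |((φ v : ℤ) : ℝ)| ≤ (k:ℝ)*T := by
        rw [← hφspec v]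
        have hdot : (u ⬝ᵥ A.mulVec fun i => ((v i : ℝ))) = ∑ i, u i * Av A v i := rfl
        rw [hdot]
        calc |∑ i, u i * Av A v i| ≤ ∑ i, |u i * Av A v i| :=
              Finset.abs_sum_le_sum_abs _ _
          _ ≤ ∑ i : Fin k, T := by
              refine Finset.sum_le_sum fun i _ => ?_
              rw [abs_mul]
              calc |u i| * |Av A v i| ≤ 1 * T := by
                    refine mul_le_mul (hub i) (mem_SV.mp hv i) (abs_nonneg _) zero_le_one
                _ = T := one_mul T
          _ = (k:ℝ)*T := by
              rw [Finset.sum_const, Finset.card_univ, Fintype.card_fin, nsmul_eq_mul]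
      rw [Finset.mem_Icc]
      constructor
      · have h1 : -((k:ℝ)*T) ≤ ((φ v : ℤ) : ℝ) := (abs_le.mp hbound).1
        have : (-(φ v) : ℝ) ≤ (k:ℝ)*T := by push_cast; linarith
        have := Int.le_floor.mpr (by exact_mod_cast this : ((-(φ v) : ℤ) : ℝ) ≤ (k:ℝ)*T)
        omega
      · have h1 : ((φ v : ℤ) : ℝ) ≤ (k:ℝ)*T := (abs_le.mp hbound).2
        exact Int.le_floor.mpr h1
    have hcardlt : (Finset.Icc (-M) M).card < (SV A hA T).card := by
      have hcic : ((Finset.Icc (-M) M).card : ℝ) = 2*(M:ℝ)+1 := by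
        rw [Int.card_Icc]
        have h2M : (0:ℤ) ≤ M + 1 - (-M) := by omega
        have htn : (((M + 1 - (-M)).toNat : ℕ) : ℝ) = ((M + 1 - (-M) : ℤ) : ℝ) := by
          exact_mod_cast congrArg (fun z : ℤ => (z:ℝ)) (Int.toNat_of_nonneg h2M)
        rw [htn]
        push_cast
        ring
      have hMle : (M:ℝ) ≤ (k:ℝ)*T := Int.floor_le _
      have : ((Finset.Icc (-M) M).card : ℝ) < ((SV A hA T).card : ℝ) := by
        rw [hcic]
        linarith
      exact_mod_cast this
    obtain ⟨v, hv, v', hv', hvne, hveq⟩ :=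
      Finset.exists_ne_map_eq_of_card_lt_of_maps_to hcardlt hmaps
    set w := v - v' with hw
    have hwne : w ≠ 0 := sub_ne_zero_of_ne hvne
    have hwmem : w ∈ SV A hA (2*T) := by
      rw [mem_SV]
      intro i
      rw [hw, Av_sub]
      simp only [Pi.sub_apply]
      have h1 := abs_le.mp (mem_SV.mp hv i)
      have h2 := abs_le.mp (mem_SV.mp hv' i)
      rw [abs_le]
      constructor <;> linarith [h1.1, h1.2, h2.1, h2.2]
    refine ⟨A.mulVec (fun i => ((w i : ℝ))), ?_, ?_, ?_⟩
    · rw [hHs]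
      refine Finset.mem_image.mpr ⟨w, Finset.mem_erase.mpr ⟨hwne, hwmem⟩, rfl⟩
    · intro hcon
      apply hwne
      refine Av_injective hA ?_
      rw [Av_zero]
      exact hcon
    · have hsub' : (fun i => ((w i : ℝ))) = (fun i => ((v i : ℝ))) - (fun i => ((v' i : ℝ))) := by
        funext i
        simp [hw]
      rw [hsub', Matrix.mulVec_sub, dotProduct_sub, hφspec v, hφspec v', hveq]
      ring
end

section
/- Let a₁, a₂ be integers, q a squarefree positive integer coprime to a₁a₂, and κ an integer coprime to q. (i) Suppose x₁, x₂, y₁, y₂ are integers coprime to q satisfying x₁y₁ + κx₂y₂ ≡ 0 (mod q) and q³ | a₁x₁²y₁³ + a₂x₂²y₂³. Then: a₂x₁ ≡ κ³a₁x₂ (mod q); κ²a₁y₁ + a₂y₂ ≡ 0 (mod q); κ²a₁x₂y₁ + a₂x₂y₂ ≡ 0 (mod q); 2a₂x₁y₁ + κ³a₁x₂y₁ + 3κa₂x₂y₂ ≡ 0 (mod q²); and 5κ²a₁a₂x₁y₁ + a₂²x₁y₂ + κ⁵a₁²x₂y₁ + 5κ³a₁a₂x₂y₂ ≡ 0 (mod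 q³). (ii) Conversely, if integers x₁, x₂, y₁, y₂ satisfy all five of the congruences just listed, and r = gcd(y₁, y₂, q), then q³r² divides 18(a₁x₁²y₁³ + a₂x₂²y₂³). -/
private lemma cancel_cop {q m a : ℤ} (h : IsCoprime q m) (hd : q ∣ a * m) : q ∣ a :=
  h.dvd_of_dvd_mul_right hd

private lemma cancel_cop_pow {q m a : ℤ} (h : IsCoprime q m) {n : ℕ} (hd : q ^ n ∣ a * m) :
    q ^ n ∣ a :=
  (h.pow_left).dvd_of_dvd_mul_right hd

/-- Let `a₁, a₂` be integers, `q` a squarefree positive integer coprime to `a₁a₂`, and `κ` an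
integer coprime to `q`.
(i) If `x₁, x₂, y₁, y₂` are integers coprime to `q` with `x₁y₁ + κx₂y₂ ≡ 0 (mod q)` and
`q³ ∣ a₁x₁²y₁³ + a₂x₂²y₂³`, then the five congruences (c1)–(c4) hold:
`a₂x₁ ≡ κ³a₁x₂ (mod q)`; `κ²a₁y₁ + a₂y₂ ≡ 0 (mod q)`;
`κ²a₁x₂y₁ + a₂x₂y₂ ≡ 0 (mod q)`; `2a₂x₁y₁ + κ³a₁x₂y₁ + 3κa₂x₂y₂ ≡ 0 (mod q²)`;
`5κ²a₁a₂x₁y₁ + a₂²x₁y₂ + κ⁵a₁²x₂y₁ + 5κ³a₁a₂x₂y₂ ≡ 0 (mod q³)`.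
(ii) Conversely, if `x₁, x₂, y₁, y₂` satisfy all five of these congruences and
`r = gcd(y₁, y₂, q)`, then `q³r² ∣ 18(a₁x₁²y₁³ + a₂x₂²y₂³)`. -/
theorem congruence_lemma (a₁ a₂ q κ : ℤ) (hq : 0 < q) (hqsf : Squarefree q)
    (hqa : IsCoprime q (a₁ * a₂)) (hκ : IsCoprime κ q) :
    (∀ x₁ x₂ y₁ y₂ : ℤ,
      IsCoprime x₁ q → IsCoprime x₂ q → IsCoprime y₁ q → IsCoprime y₂ q →
      q ∣ x₁ * y₁ + κ * x₂ * y₂ →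
      q ^ 3 ∣ a₁ * x₁ ^ 2 * y₁ ^ 3 + a₂ * x₂ ^ 2 * y₂ ^ 3 →
        (q ∣ a₂ * x₁ - κ ^ 3 * a₁ * x₂) ∧
        (q ∣ κ ^ 2 * a₁ * y₁ + a₂ * y₂) ∧
        (q ∣ κ ^ 2 * a₁ * x₂ * y₁ + a₂ * x₂ * y₂) ∧
        (q ^ 2 ∣ 2 * a₂ * x₁ * y₁ + κ ^ 3 * a₁ * x₂ * y₁ + 3 * κ * a₂ * x₂ * y₂) ∧
        (q ^ 3 ∣ 5 * κ ^ 2 * a₁ * a₂ * x₁ * y₁ + a₂ ^ 2 * x₁ * y₂ +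
          κ ^ 5 * a₁ ^ 2 * x₂ * y₁ + 5 * κ ^ 3 * a₁ * a₂ * x₂ * y₂)) ∧
    (∀ x₁ x₂ y₁ y₂ : ℤ,
      (q ∣ a₂ * x₁ - κ ^ 3 * a₁ * x₂) →
      (q ∣ κ ^ 2 * a₁ * y₁ + a₂ * y₂) →
      (q ∣ κ ^ 2 * a₁ * x₂ * y₁ + a₂ * x₂ * y₂) →
      (q ^ 2 ∣ 2 * a₂ * x₁ * y₁ + κ ^ 3 * a₁ * x₂ * y₁ + 3 * κ * a₂ * x₂ * y₂) →
      (q ^ 3 ∣ 5 * κ ^ 2 * a₁ * a₂ * x₁ * y₁ + a₂ ^ 2 * x₁ * y₂ +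
        κ ^ 5 * a₁ ^ 2 * x₂ * y₁ + 5 * κ ^ 3 * a₁ * a₂ * x₂ * y₂) →
      q ^ 3 * (Int.gcd y₁ (Int.gcd y₂ q) : ℤ) ^ 2 ∣
        18 * (a₁ * x₁ ^ 2 * y₁ ^ 3 + a₂ * x₂ ^ 2 * y₂ ^ 3)) := by
  constructor
  · -- Part (i)
    intro x₁ x₂ y₁ y₂ hx1 hx2 hy1 hy2 hu hS
    obtain ⟨s, hs⟩ := hS
    obtain ⟨w, hw⟩ := hu
    -- (c1a)  q ∣ D  where  D = a₂x₁ - κ³a₁x₂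
    have hD : q ∣ a₂ * x₁ - κ ^ 3 * a₁ * x₂ := by
      refine cancel_cop ((hx1.symm.pow_right.mul_right hx2.symm.pow_right).mul_right
        hy2.symm.pow_right) (a := a₂ * x₁ - κ ^ 3 * a₁ * x₂) (m := x₁ ^ 2 * x₂ ^ 2 * y₂ ^ 3) ?_
      exact ⟨x₁ ^ 3 * q ^ 2 * s -
        (a₁ * x₁ ^ 2 * (x₁ * y₁ + κ * x₂ * y₂) ^ 2 -
          3 * κ * a₁ * x₁ ^ 2 * x₂ * y₂ * (x₁ * y₁ + κ * x₂ * y₂) +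
          3 * κ ^ 2 * a₁ * x₁ ^ 2 * x₂ ^ 2 * y₂ ^ 2) * w,
        by linear_combination (x₁ ^ 3) * hs -
          (a₁ * x₁ ^ 2 * (x₁ * y₁ + κ * x₂ * y₂) ^ 2 -
            3 * κ * a₁ * x₁ ^ 2 * x₂ * y₂ * (x₁ * y₁ + κ * x₂ * y₂) +
            3 * κ ^ 2 * a₁ * x₁ ^ 2 * x₂ ^ 2 * y₂ ^ 2) * hw⟩
    obtain ⟨d, hd⟩ := hD
    -- (c1b)  q ∣ E  where  E = κ²a₁y₁ + a₂y₂
    have hE : q ∣ κ ^ 2 * a₁ * y₁ + a₂ * y₂ := by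
      refine cancel_cop (hx1.symm.mul_right hy2.symm)
        (a := κ ^ 2 * a₁ * y₁ + a₂ * y₂) (m := x₁ * y₂) ?_
      exact ⟨κ ^ 2 * a₁ * y₂ * w + y₂ ^ 2 * d,
        by linear_combination (κ ^ 2 * a₁ * y₂) * hw + (y₂ ^ 2) * hd⟩
    obtain ⟨e₀, he₀⟩ := hE
    -- (c2)
    have hc2 : q ∣ κ ^ 2 * a₁ * x₂ * y₁ + a₂ * x₂ * y₂ :=
      ⟨x₂ * e₀, by linear_combination x₂ * he₀⟩
    -- (c3)  q² ∣ F
    have hF : q ^ 2 ∣ 2 * a₂ * x₁ * y₁ + κ ^ 3 * a₁ * x₂ * y₁ + 3 * κ * a₂ * x₂ * y₂ := by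
      refine cancel_cop_pow ((hx1.symm.pow_right.mul_right hx2.symm.pow_right).mul_right
        hy1.symm.pow_right)
        (a := 2 * a₂ * x₁ * y₁ + κ ^ 3 * a₁ * x₂ * y₁ + 3 * κ * a₂ * x₂ * y₂)
        (m := x₁ ^ 2 * x₂ ^ 2 * y₁ ^ 2) ?_
      exact ⟨κ ^ 3 * x₂ ^ 3 * q * s +
        (3 * a₂ * x₁ * x₂ ^ 2 * y₁ - a₂ * x₂ ^ 2 * (x₁ * y₁ + κ * x₂ * y₂)) * w ^ 2,
        by linear_combination (κ ^ 3 * x₂ ^ 3) * hs +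
          ((3 * a₂ * x₁ * x₂ ^ 2 * y₁ - a₂ * x₂ ^ 2 * (x₁ * y₁ + κ * x₂ * y₂)) *
            (x₁ * y₁ + κ * x₂ * y₂ + q * w)) * hw⟩
    obtain ⟨f, hf⟩ := hF
    -- auxiliary  q² ∣ G₂  where  G₂ = y₂D + 3κ²a₁u
    have hG2 : q ^ 2 ∣ y₂ * (a₂ * x₁ - κ ^ 3 * a₁ * x₂) +
        3 * κ ^ 2 * a₁ * (x₁ * y₁ + κ * x₂ * y₂) := by
      refine cancel_cop_pow ((hx1.symm.pow_right.mul_right hx2.symm.pow_right).mul_right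
        hy2.symm.pow_right)
        (a := y₂ * (a₂ * x₁ - κ ^ 3 * a₁ * x₂) + 3 * κ ^ 2 * a₁ * (x₁ * y₁ + κ * x₂ * y₂))
        (m := x₁ ^ 2 * x₂ ^ 2 * y₂ ^ 2) ?_
      exact ⟨x₁ ^ 3 * q * s +
        (3 * κ * a₁ * x₁ ^ 2 * x₂ * y₂ - a₁ * x₁ ^ 2 * (x₁ * y₁ + κ * x₂ * y₂)) * w ^ 2,
        by linear_combination (x₁ ^ 3) * hs +
          ((3 * κ * a₁ * x₁ ^ 2 * x₂ * y₂ - a₁ * x₁ ^ 2 * (x₁ * y₁ + κ * x₂ * y₂)) *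
            (x₁ * y₁ + κ * x₂ * y₂ + q * w)) * hw⟩
    obtain ⟨g, hg⟩ := hG2
    -- auxiliary  q³ ∣ H  where  H = x₁y₁²D - 3a₂x₁y₁u + 3a₂u²
    have hH : q ^ 3 ∣ x₁ * y₁ ^ 2 * (a₂ * x₁ - κ ^ 3 * a₁ * x₂) -
        3 * a₂ * x₁ * y₁ * (x₁ * y₁ + κ * x₂ * y₂) + 3 * a₂ * (x₁ * y₁ + κ * x₂ * y₂) ^ 2 := by
      refine cancel_cop_pow ((hx1.symm.mul_right hx2.symm.pow_right).mul_right hy1.symm)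
        (a := x₁ * y₁ ^ 2 * (a₂ * x₁ - κ ^ 3 * a₁ * x₂) -
          3 * a₂ * x₁ * y₁ * (x₁ * y₁ + κ * x₂ * y₂) + 3 * a₂ * (x₁ * y₁ + κ * x₂ * y₂) ^ 2)
        (m := x₁ * x₂ ^ 2 * y₁) ?_
      exact ⟨-(κ ^ 3 * x₂ ^ 3) * s + a₂ * x₂ ^ 2 * w ^ 3,
        by linear_combination (-(κ ^ 3 * x₂ ^ 3)) * hs +
          (a₂ * x₂ ^ 2 * ((x₁ * y₁ + κ * x₂ * y₂) ^ 2 +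
            q * w * (x₁ * y₁ + κ * x₂ * y₂) + q ^ 2 * w ^ 2)) * hw⟩
    obtain ⟨h, hh⟩ := hH
    -- (c4)  q³ ∣ T
    have hT : q ^ 3 ∣ 5 * κ ^ 2 * a₁ * a₂ * x₁ * y₁ + a₂ ^ 2 * x₁ * y₂ +
        κ ^ 5 * a₁ ^ 2 * x₂ * y₁ + 5 * κ ^ 3 * a₁ * a₂ * x₂ * y₂ := by
      refine cancel_cop_pow ((hx1.symm.mul_right hy1.symm).mul_right hy2.symm)
        (a := 5 * κ ^ 2 * a₁ * a₂ * x₁ * y₁ + a₂ ^ 2 * x₁ * y₂ +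
          κ ^ 5 * a₁ ^ 2 * x₂ * y₁ + 5 * κ ^ 3 * a₁ * a₂ * x₂ * y₂)
        (m := x₁ * y₁ * y₂) ?_
      refine ⟨-(2 * κ ^ 2 * a₁ * y₂) * h + 2 * κ ^ 2 * a₁ * y₂ * w * f +
        3 * a₂ * y₂ * w * g - y₂ * q * f * g, ?_⟩
      linear_combination (-(2 * κ ^ 2 * a₁ * y₂)) * hh +
        (2 * κ ^ 2 * a₁ * y₂ *
          (2 * a₂ * x₁ * y₁ + κ ^ 3 * a₁ * x₂ * y₁ + 3 * κ * a₂ * x₂ * y₂) +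
         3 * a₂ * y₂ * (y₂ * (a₂ * x₁ - κ ^ 3 * a₁ * x₂) +
           3 * κ ^ 2 * a₁ * (x₁ * y₁ + κ * x₂ * y₂))) * hw +
        (2 * κ ^ 2 * a₁ * y₂ * q * w -
          y₂ * (y₂ * (a₂ * x₁ - κ ^ 3 * a₁ * x₂) +
            3 * κ ^ 2 * a₁ * (x₁ * y₁ + κ * x₂ * y₂))) * hf +
        (3 * a₂ * y₂ * q * w - y₂ * q ^ 2 * f) * hg
    exact ⟨⟨d, hd⟩, ⟨e₀, he₀⟩, hc2, ⟨f, hf⟩, hT⟩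
  · -- Part (ii)
    intro x₁ x₂ y₁ y₂ hD hE hc2 hF hT
    by_cases hS0 : a₁ * x₁ ^ 2 * y₁ ^ 3 + a₂ * x₂ ^ 2 * y₂ ^ 3 = 0
    · rw [hS0, mul_zero]; exact dvd_zero _
    obtain ⟨qn, rfl⟩ : ∃ n : ℕ, q = (n : ℤ) := ⟨q.toNat, (Int.toNat_of_nonneg hq.le).symm⟩
    have hq0 : (qn : ℤ) ≠ 0 := hq.ne'
    have hqn0 : qn ≠ 0 := by exact_mod_cast hq0
    have hqa2 : IsCoprime (qn : ℤ) a₂ := hqa.of_mul_right_right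
    -- global fact :  q³ ∣ 2S
    have key3 : (qn : ℤ) ^ 3 ∣ 2 * (a₁ * x₁ ^ 2 * y₁ ^ 3 + a₂ * x₂ ^ 2 * y₂ ^ 3) := by
      obtain ⟨d, hd⟩ := hD
      obtain ⟨e₀, he₀⟩ := hE
      obtain ⟨f, hf⟩ := hF
      obtain ⟨t, ht⟩ := hT
      refine cancel_cop_pow (hqa2.pow_right)
        (a := 2 * (a₁ * x₁ ^ 2 * y₁ ^ 3 + a₂ * x₂ ^ 2 * y₂ ^ 3)) (m := a₂ ^ 2) ?_
      refine ⟨2 * x₂ ^ 2 * e₀ ^ 3 + 9 * a₁ * y₁ ^ 2 * d * f + 10 * κ * a₁ * x₂ * y₁ * e₀ * f -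
        4 * a₁ * y₁ * (qn : ℤ) * f ^ 2 + κ * a₁ * x₂ * y₁ ^ 2 * t, ?_⟩
      linear_combination
        (2 * x₂ ^ 2 * ((κ ^ 2 * a₁ * y₁ + a₂ * y₂) ^ 2 +
          (qn : ℤ) * e₀ * (κ ^ 2 * a₁ * y₁ + a₂ * y₂) + (qn : ℤ) ^ 2 * e₀ ^ 2) +
         10 * κ * a₁ * x₂ * y₁ *
          (2 * a₂ * x₁ * y₁ + κ ^ 3 * a₁ * x₂ * y₁ + 3 * κ * a₂ * x₂ * y₂)) * he₀ +
        (9 * a₁ * y₁ ^ 2 *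
          (2 * a₂ * x₁ * y₁ + κ ^ 3 * a₁ * x₂ * y₁ + 3 * κ * a₂ * x₂ * y₂)) * hd +
        (9 * a₁ * y₁ ^ 2 * (qn : ℤ) * d + 10 * κ * a₁ * x₂ * y₁ * (qn : ℤ) * e₀ -
          4 * a₁ * y₁ * ((2 * a₂ * x₁ * y₁ + κ ^ 3 * a₁ * x₂ * y₁ + 3 * κ * a₂ * x₂ * y₂) +
            (qn : ℤ) ^ 2 * f)) * hf +
        (κ * a₁ * x₂ * y₁ ^ 2) * ht
    have key18 : (qn : ℤ) ^ 3 ∣ 18 * (a₁ * x₁ ^ 2 * y₁ ^ 3 + a₂ * x₂ ^ 2 * y₂ ^ 3) := by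
      obtain ⟨c, hc⟩ := key3
      exact ⟨9 * c, by linear_combination 9 * hc⟩

    -- per-prime fact : for p ∣ q with p ∣ y₁, y₂ we get p⁵ ∣ 18S
    have key5 : ∀ p : ℕ, p.Prime → (p : ℤ) ∣ (qn : ℤ) → (p : ℤ) ∣ y₁ → (p : ℤ) ∣ y₂ →
        (p : ℤ) ^ 5 ∣ 18 * (a₁ * x₁ ^ 2 * y₁ ^ 3 + a₂ * x₂ ^ 2 * y₂ ^ 3) := by
      intro p pp hpq hpy1 hpy2
      have hp : Prime ((p : ℕ) : ℤ) := Nat.prime_iff_prime_int.mp pp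
      have hne : ((p : ℕ) : ℤ) ≠ 0 := hp.ne_zero
      have hPD : (p : ℤ) ∣ a₂ * x₁ - κ ^ 3 * a₁ * x₂ := hpq.trans hD
      have hPF : (p : ℤ) ^ 2 ∣ 2 * a₂ * x₁ * y₁ + κ ^ 3 * a₁ * x₂ * y₁ + 3 * κ * a₂ * x₂ * y₂ :=
        (pow_dvd_pow_of_dvd hpq 2).trans hF
      have hPT : (p : ℤ) ^ 3 ∣ 5 * κ ^ 2 * a₁ * a₂ * x₁ * y₁ + a₂ ^ 2 * x₁ * y₂ +
          κ ^ 5 * a₁ ^ 2 * x₂ * y₁ + 5 * κ ^ 3 * a₁ * a₂ * x₂ * y₂ :=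
        (pow_dvd_pow_of_dvd hpq 3).trans hT
      have hna2 : ¬ (p : ℤ) ∣ a₂ := fun hdvd => hp.not_unit
        ((hqa.of_isCoprime_of_dvd_left hpq).isUnit_of_dvd' dvd_rfl (hdvd.mul_left a₁))
      have hnk : ¬ (p : ℤ) ∣ κ := fun hdvd => hp.not_unit
        ((hκ.symm.of_isCoprime_of_dvd_left hpq).isUnit_of_dvd' dvd_rfl hdvd)
      by_cases hx2 : (p : ℤ) ∣ x₂
      · -- p divides x₂ hence x₁ ; then p⁵ ∣ S directly
        have hx1 : (p : ℤ) ∣ x₁ := by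
          have h1 : (p : ℤ) ∣ a₂ * x₁ := by
            have h2 := dvd_add hPD (hx2.mul_left (κ ^ 3 * a₁))
            rwa [show a₂ * x₁ - κ ^ 3 * a₁ * x₂ + κ ^ 3 * a₁ * x₂ = a₂ * x₁ by ring] at h2
          rcases hp.dvd_mul.mp h1 with h2 | h2
          · exact absurd h2 hna2
          · exact h2
        obtain ⟨u1, hu1⟩ := hx1
        obtain ⟨u2, hu2⟩ := hx2
        obtain ⟨v1, hv1⟩ := hpy1
        obtain ⟨v2, hv2⟩ := hpy2
        exact ⟨18 * (a₁ * u1 ^ 2 * v1 ^ 3 + a₂ * u2 ^ 2 * v2 ^ 3), by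
          rw [hu1, hu2, hv1, hv2]; ring⟩
      by_cases hp3 : p = 3
      · -- p = 3 : trivial since 27 ∣ S and 9 ∣ 18
        subst hp3
        obtain ⟨v1, hv1⟩ := hpy1
        obtain ⟨v2, hv2⟩ := hpy2
        exact ⟨2 * (a₁ * x₁ ^ 2 * v1 ^ 3 + a₂ * x₂ ^ 2 * v2 ^ 3), by
          rw [hv1, hv2]; push_cast; ring⟩
      · -- core case : reduce by p
        obtain ⟨Y₁, rfl⟩ := hpy1
        obtain ⟨Y₂, rfl⟩ := hpy2
        have hF' : (p : ℤ) ∣ 2 * a₂ * x₁ * Y₁ + κ ^ 3 * a₁ * x₂ * Y₁ + 3 * κ * a₂ * x₂ * Y₂ := by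
          obtain ⟨c, hc⟩ := hPF
          refine ⟨c, mul_left_cancel₀ hne ?_⟩
          linear_combination hc
        have hT' : (p : ℤ) ^ 2 ∣ 5 * κ ^ 2 * a₁ * a₂ * x₁ * Y₁ + a₂ ^ 2 * x₁ * Y₂ +
            κ ^ 5 * a₁ ^ 2 * x₂ * Y₁ + 5 * κ ^ 3 * a₁ * a₂ * x₂ * Y₂ := by
          obtain ⟨c, hc⟩ := hPT
          refine ⟨c, mul_left_cancel₀ hne ?_⟩
          linear_combination hc
        have hE' : (p : ℤ) ∣ κ ^ 2 * a₁ * Y₁ + a₂ * Y₂ := by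
          have h1 : (p : ℤ) ∣ 3 * κ * x₂ * (κ ^ 2 * a₁ * Y₁ + a₂ * Y₂) := by
            have h2 := dvd_sub hF' (hPD.mul_left (2 * Y₁))
            rwa [show 2 * a₂ * x₁ * Y₁ + κ ^ 3 * a₁ * x₂ * Y₁ + 3 * κ * a₂ * x₂ * Y₂ -
              2 * Y₁ * (a₂ * x₁ - κ ^ 3 * a₁ * x₂) =
              3 * κ * x₂ * (κ ^ 2 * a₁ * Y₁ + a₂ * Y₂) by ring] at h2
          rcases hp.dvd_mul.mp h1 with h2 | h2
          · rcases hp.dvd_mul.mp h2 with h3 | h3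
            · rcases hp.dvd_mul.mp h3 with h4 | h4
              · have : p ∣ 3 := by exact_mod_cast h4
                exact absurd ((Nat.prime_dvd_prime_iff_eq pp (by norm_num)).mp this) hp3
              · exact absurd h4 hnk
            · exact absurd h3 hx2
          · exact h2
        -- reduced master identity : p² ∣ 2·(a₁x₁²Y₁³ + a₂x₂²Y₂³)
        have hcore : (p : ℤ) ^ 2 ∣ 2 * (a₁ * x₁ ^ 2 * Y₁ ^ 3 + a₂ * x₂ ^ 2 * Y₂ ^ 3) := by
          obtain ⟨d, hd⟩ := hPD
          obtain ⟨e₀, he₀⟩ := hE'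
          obtain ⟨f, hf⟩ := hF'
          obtain ⟨t, ht⟩ := hT'
          refine cancel_cop_pow ((hp.coprime_iff_not_dvd.mpr hna2).pow_right)
            (a := 2 * (a₁ * x₁ ^ 2 * Y₁ ^ 3 + a₂ * x₂ ^ 2 * Y₂ ^ 3)) (m := a₂ ^ 2) ?_
          refine ⟨2 * x₂ ^ 2 * (p : ℤ) * e₀ ^ 3 + 9 * a₁ * Y₁ ^ 2 * d * f +
            10 * κ * a₁ * x₂ * Y₁ * e₀ * f - 4 * a₁ * Y₁ * f ^ 2 +
            κ * a₁ * x₂ * Y₁ ^ 2 * t, ?_⟩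
          linear_combination
            (2 * x₂ ^ 2 * ((κ ^ 2 * a₁ * Y₁ + a₂ * Y₂) ^ 2 +
              (p : ℤ) * e₀ * (κ ^ 2 * a₁ * Y₁ + a₂ * Y₂) + (p : ℤ) ^ 2 * e₀ ^ 2) +
             10 * κ * a₁ * x₂ * Y₁ *
              (2 * a₂ * x₁ * Y₁ + κ ^ 3 * a₁ * x₂ * Y₁ + 3 * κ * a₂ * x₂ * Y₂)) * he₀ +
            (9 * a₁ * Y₁ ^ 2 *
              (2 * a₂ * x₁ * Y₁ + κ ^ 3 * a₁ * x₂ * Y₁ + 3 * κ * a₂ * x₂ * Y₂)) * hd +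
            (9 * a₁ * Y₁ ^ 2 * (p : ℤ) * d + 10 * κ * a₁ * x₂ * Y₁ * (p : ℤ) * e₀ -
              4 * a₁ * Y₁ * ((2 * a₂ * x₁ * Y₁ + κ ^ 3 * a₁ * x₂ * Y₁ + 3 * κ * a₂ * x₂ * Y₂) +
                (p : ℤ) * f)) * hf +
            (κ * a₁ * x₂ * Y₁ ^ 2) * ht
        by_cases hp2 : p = 2
        · subst hp2
          obtain ⟨c, hc⟩ := hcore
          have hS' : a₁ * x₁ ^ 2 * Y₁ ^ 3 + a₂ * x₂ ^ 2 * Y₂ ^ 3 = 2 * c := by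
            have h2 : (2 : ℤ) * (a₁ * x₁ ^ 2 * Y₁ ^ 3 + a₂ * x₂ ^ 2 * Y₂ ^ 3) =
                2 * (2 * c) := by push_cast at hc; linear_combination hc
            exact mul_left_cancel₀ two_ne_zero h2
          exact ⟨9 * c, by push_cast; linear_combination 144 * hS'⟩
        · have hodd : ¬ (p : ℤ) ∣ 2 := fun hdvd => hp2
            ((Nat.prime_dvd_prime_iff_eq pp Nat.prime_two).mp (by exact_mod_cast hdvd))
          have h1 : (p : ℤ) ^ 2 ∣ a₁ * x₁ ^ 2 * Y₁ ^ 3 + a₂ * x₂ ^ 2 * Y₂ ^ 3 := by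
            refine cancel_cop_pow (hp.coprime_iff_not_dvd.mpr hodd)
              (a := a₁ * x₁ ^ 2 * Y₁ ^ 3 + a₂ * x₂ ^ 2 * Y₂ ^ 3) (m := 2) ?_
            rwa [mul_comm] at hcore
          obtain ⟨c, hc⟩ := h1
          exact ⟨18 * c, by linear_combination 18 * (p : ℤ) ^ 3 * hc⟩

    -- gluing via factorizations
    have hS18 : 18 * (a₁ * x₁ ^ 2 * y₁ ^ 3 + a₂ * x₂ ^ 2 * y₂ ^ 3) ≠ 0 :=
      mul_ne_zero (by norm_num) hS0
    have hN0 : (18 * (a₁ * x₁ ^ 2 * y₁ ^ 3 + a₂ * x₂ ^ 2 * y₂ ^ 3)).natAbs ≠ 0 :=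
      Int.natAbs_ne_zero.mpr hS18
    set rn : ℕ := Int.gcd y₁ (Int.gcd y₂ (qn : ℤ)) with hrn_def
    have hry1 : (rn : ℤ) ∣ y₁ := Int.gcd_dvd_left _ _
    have hry2 : (rn : ℤ) ∣ y₂ := (Int.gcd_dvd_right _ _).trans (Int.gcd_dvd_left _ _)
    have hrq : (rn : ℤ) ∣ (qn : ℤ) := (Int.gcd_dvd_right _ _).trans (Int.gcd_dvd_right _ _)
    have hrqn : rn ∣ qn := Int.natCast_dvd_natCast.mp hrq
    have hrn0 : rn ≠ 0 := by
      intro h0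
      rw [h0] at hrq
      exact hqn0 (by exact_mod_cast zero_dvd_iff.mp (by exact_mod_cast hrq))
    have hsq : Squarefree qn := by simpa using Int.squarefree_natAbs.mpr hqsf
    have cast_goal : ((qn ^ 3 * rn ^ 2 : ℕ) : ℤ) = (qn : ℤ) ^ 3 * (rn : ℤ) ^ 2 := by
      push_cast; ring
    rw [← cast_goal, Int.natCast_dvd]
    refine (Nat.factorization_le_iff_dvd
      (mul_ne_zero (pow_ne_zero _ hqn0) (pow_ne_zero _ hrn0)) hN0).mp ?_
    rw [Finsupp.le_def]
    intro p
    rw [Nat.factorization_mul (pow_ne_zero _ hqn0) (pow_ne_zero _ hrn0),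
      Nat.factorization_pow, Nat.factorization_pow]
    simp only [Finsupp.coe_add, Finsupp.coe_smul, Pi.add_apply, Pi.smul_apply, smul_eq_mul]
    by_cases pp : p.Prime
    · by_cases hpq : p ∣ qn
      · have hq1 : qn.factorization p = 1 :=
          le_antisymm (hsq.natFactorization_le_one p)
            (pp.factorization_pos_of_dvd hqn0 hpq)
        have hpzq : (p : ℤ) ∣ (qn : ℤ) := Int.natCast_dvd_natCast.mpr hpq
        by_cases hpr : p ∣ rn
        · have h5 := key5 p pp hpzq ((Int.natCast_dvd_natCast.mpr hpr).trans hry1)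
            ((Int.natCast_dvd_natCast.mpr hpr).trans hry2)
          have h5n : p ^ 5 ∣ (18 * (a₁ * x₁ ^ 2 * y₁ ^ 3 + a₂ * x₂ ^ 2 * y₂ ^ 3)).natAbs :=
            Int.natCast_dvd.mp (by push_cast; exact h5)
          have h5f : 5 ≤ ((18 * (a₁ * x₁ ^ 2 * y₁ ^ 3 + a₂ * x₂ ^ 2 * y₂ ^ 3)).natAbs).factorization p :=
            (pp.pow_dvd_iff_le_factorization hN0).mp h5n
          have hr1 : rn.factorization p ≤ 1 :=
            (Squarefree.squarefree_of_dvd hrqn hsq).natFactorization_le_one p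
          omega
        · have hr0 : rn.factorization p = 0 := Nat.factorization_eq_zero_of_not_dvd hpr
          have h3 := (pow_dvd_pow_of_dvd hpzq 3).trans key18
          have h3n : p ^ 3 ∣ (18 * (a₁ * x₁ ^ 2 * y₁ ^ 3 + a₂ * x₂ ^ 2 * y₂ ^ 3)).natAbs :=
            Int.natCast_dvd.mp (by push_cast; exact h3)
          have h3f : 3 ≤ ((18 * (a₁ * x₁ ^ 2 * y₁ ^ 3 + a₂ * x₂ ^ 2 * y₂ ^ 3)).natAbs).factorization p :=
            (pp.pow_dvd_iff_le_factorization hN0).mp h3n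
          omega
      · have h0 : qn.factorization p = 0 := Nat.factorization_eq_zero_of_not_dvd hpq
        have hr0 : rn.factorization p = 0 :=
          Nat.factorization_eq_zero_of_not_dvd (fun h => hpq (h.trans hrqn))
        simp [h0, hr0]
    · simp [Nat.factorization_eq_zero_of_not_prime _ pp]
end

section
/- For every fixed ε > 0 there is a constant C(ε) such that, with the notation of the context, for every admissible pair (q, κ) one has #S(q, κ) ≤ C(ε) · Y₁Y₂Y₃^{−1}B^ε. -/
/-- The set `S₀(B)` of sextuples `(x₁, x₂, x₃, y₁, y₂, y₃)` of positive integers (encoded as a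
pair of functions `Fin 3 → ℤ`) such that `Xᵢ/2 < xᵢ ≤ Xᵢ` and `Yᵢ/2 < yᵢ ≤ Yᵢ`, the equation
`a₁x₁²y₁³ + a₂x₂²y₂³ + a₃x₃²y₃³ = 0` holds, `gcd(x₁y₁, x₂y₂, x₃y₃) = 1`,
`gcd(a₁a₂a₃, x₁x₂x₃y₁y₂y₃) = 1`, and `a₁y₁, a₂y₂, a₃y₃` are all squarefree. -/
def S0 (a : Fin 3 → ℤ) (X Y : Fin 3 → ℝ) : Set ((Fin 3 → ℤ) × (Fin 3 → ℤ)) :=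
  {p | (∀ i, 0 < p.1 i) ∧ (∀ i, 0 < p.2 i) ∧
    (∀ i, X i / 2 < (p.1 i : ℝ) ∧ (p.1 i : ℝ) ≤ X i) ∧
    (∀ i, Y i / 2 < (p.2 i : ℝ) ∧ (p.2 i : ℝ) ≤ Y i) ∧
    a 0 * p.1 0 ^ 2 * p.2 0 ^ 3 + a 1 * p.1 1 ^ 2 * p.2 1 ^ 3 +
      a 2 * p.1 2 ^ 2 * p.2 2 ^ 3 = 0 ∧
    Int.gcd (p.1 0 * p.2 0) (Int.gcd (p.1 1 * p.2 1) (p.1 2 * p.2 2)) = 1 ∧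
    Int.gcd (a 0 * a 1 * a 2) (p.1 0 * p.1 1 * p.1 2 * p.2 0 * p.2 1 * p.2 2) = 1 ∧
    (∀ i, Squarefree (a i * p.2 i))}

/-- The set `S(q, κ)` of quadruples `(x₁, x₂, y₁, y₂)` of positive integers satisfying
`x₁y₁ + κx₂y₂ ≡ 0 (mod q)` and such that `(x₁, x₂, x₃, y₁, y₂, q) ∈ S₀(B)` for some positive
integer `x₃`. -/
def SqK (a : Fin 3 → ℤ) (X Y : Fin 3 → ℝ) (q κ : ℤ) : Set (ℤ × ℤ × ℤ × ℤ) :=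
  {t | ∃ x₁ x₂ y₁ y₂ : ℤ, t = (x₁, x₂, y₁, y₂) ∧
    0 < x₁ ∧ 0 < x₂ ∧ 0 < y₁ ∧ 0 < y₂ ∧
    q ∣ x₁ * y₁ + κ * x₂ * y₂ ∧
    ∃ x₃ : ℤ, 0 < x₃ ∧ (![x₁, x₂, x₃], ![y₁, y₂, q]) ∈ S0 a X Y}

private lemma no_common_prime_isCoprime {m n : ℤ}
    (h : ∀ p : ℕ, p.Prime → (p : ℤ) ∣ m → (p : ℤ) ∣ n → False) : IsCoprime m n := by
  rw [Int.isCoprime_iff_gcd_eq_one]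
  by_contra hg
  obtain ⟨p, pp, pd⟩ := Nat.exists_prime_and_dvd hg
  have hpz : (p : ℤ) ∣ (Int.gcd m n : ℤ) := Int.natCast_dvd_natCast.mpr pd
  exact h p pp (hpz.trans (Int.gcd_dvd_left m n)) (hpz.trans (Int.gcd_dvd_right m n))

private lemma cube_dvd_of_forall_prime (m : ℤ) :
    ∀ r : ℕ, Squarefree r → (∀ p : ℕ, p.Prime → p ∣ r → (p : ℤ) ^ 3 ∣ m) → (r : ℤ) ^ 3 ∣ m := by
  intro r
  induction r using Nat.strong_induction_on with
  | _ r ih =>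
    intro hsf hp
    rcases eq_or_ne r 1 with rfl | hr1
    · norm_num
    have hr0 : r ≠ 0 := by rintro rfl; exact not_squarefree_zero hsf
    have pp : (r.minFac).Prime := Nat.minFac_prime hr1
    set p := r.minFac with hpdef
    obtain ⟨t, ht⟩ : p ∣ r := Nat.minFac_dvd r
    have htdvd : t ∣ r := ⟨p, by rw [ht]; ring⟩
    have htsf : Squarefree t := hsf.squarefree_of_dvd htdvd
    have hpt : ¬ p ∣ t := by
      intro hd
      have : p * p ∣ r := by
        obtain ⟨u, hu⟩ := hd
        exact ⟨u, by rw [ht, hu]; ring⟩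
      exact pp.ne_one (Nat.isUnit_iff.mp (hsf p this))
    have ht0 : t ≠ 0 := by rintro rfl; simp at ht; exact hr0 ht
    have htlt : t < r := by
      rw [ht]
      have : 1 < p := pp.one_lt
      calc t = 1 * t := (one_mul t).symm
        _ < p * t := by
          exact (Nat.mul_lt_mul_right (Nat.pos_of_ne_zero ht0)).mpr this
    have h1 : (t : ℤ) ^ 3 ∣ m := ih t htlt htsf (fun p' pp' hd => hp p' pp' (hd.trans htdvd))
    have h2 : (p : ℤ) ^ 3 ∣ m := hp p pp (Nat.minFac_dvd r)
    have hcop : IsCoprime ((p : ℤ) ^ 3) ((t : ℤ) ^ 3) := by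
      have : Nat.Coprime p t := (Nat.Prime.coprime_iff_not_dvd pp).mpr hpt
      have : IsCoprime (p : ℤ) (t : ℤ) := by
        rw [Int.isCoprime_iff_gcd_eq_one]
        simpa [Int.gcd_natCast_natCast] using this
      exact (this.pow_left).pow_right
    have := hcop.mul_dvd h2 h1
    have heq : ((r : ℤ)) ^ 3 = (p : ℤ) ^ 3 * (t : ℤ) ^ 3 := by
      rw [ht]; push_cast; ring
    rwa [heq]

private lemma sol_facts (a0 a1 a2 q κ x₁ x₂ x₃ y₁ y₂ : ℤ)
    (hqa : IsCoprime q (a0 * a1))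
    (heq : a0 * x₁ ^ 2 * y₁ ^ 3 + a1 * x₂ ^ 2 * y₂ ^ 3 + a2 * x₃ ^ 2 * q ^ 3 = 0)
    (hg1 : Int.gcd (x₁ * y₁) (Int.gcd (x₂ * y₂) (x₃ * q)) = 1)
    (hg2 : Int.gcd (a0 * a1 * a2) (x₁ * x₂ * x₃ * y₁ * y₂ * q) = 1)
    (hdvd : q ∣ x₁ * y₁ + κ * x₂ * y₂) :
    IsCoprime q (x₁ * y₁) ∧ IsCoprime q (x₂ * y₂) ∧ IsCoprime y₁ y₂ ∧ IsCoprime x₁ x₂ ∧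
      q ∣ a0 * κ ^ 2 * y₁ + a1 * y₂ := by
  have tripgcd : ∀ p : ℕ, p.Prime → (p : ℤ) ∣ x₁ * y₁ → (p : ℤ) ∣ x₂ * y₂ →
      (p : ℤ) ∣ x₃ * q → False := by
    intro p pp h1 h2 h3
    have : (p : ℤ) ∣ ((Int.gcd (x₁ * y₁) (Int.gcd (x₂ * y₂) (x₃ * q)) : ℕ) : ℤ) :=
      Int.dvd_coe_gcd h1 (Int.dvd_coe_gcd h2 h3)
    rw [hg1] at this
    exact (Nat.prime_iff_prime_int.mp pp).not_unit (isUnit_of_dvd_one (by exact_mod_cast this))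
  have hnota : ∀ p : ℕ, p.Prime → (p : ℤ) ∣ q → (¬ (p : ℤ) ∣ a0) ∧ (¬ (p : ℤ) ∣ a1) := by
    intro p pp hpq
    have hc : IsCoprime (p : ℤ) (a0 * a1) := IsCoprime.of_isCoprime_of_dvd_left hqa hpq
    constructor
    · intro h
      exact (Nat.prime_iff_prime_int.mp pp).not_unit
        (hc.isUnit_of_dvd' dvd_rfl (h.mul_right a1))
    · intro h
      exact (Nat.prime_iff_prime_int.mp pp).not_unit
        (hc.isUnit_of_dvd' dvd_rfl (h.mul_left a0))
  have hnotbig : ∀ p : ℕ, p.Prime → (p : ℤ) ∣ x₁ * x₂ * x₃ * y₁ * y₂ * q → ¬ (p : ℤ) ∣ a2 := by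
    intro p pp hbig h
    have h2 : (p : ℤ) ∣ a0 * a1 * a2 := h.mul_left (a0 * a1)
    have : (p : ℤ) ∣ ((Int.gcd (a0 * a1 * a2) (x₁ * x₂ * x₃ * y₁ * y₂ * q) : ℕ) : ℤ) :=
      Int.dvd_coe_gcd h2 hbig
    rw [hg2] at this
    exact (Nat.prime_iff_prime_int.mp pp).not_unit (isUnit_of_dvd_one (by exact_mod_cast this))
  have fact1 : IsCoprime q (x₁ * y₁) := by
    apply no_common_prime_isCoprime
    intro p pp hpq hpxy
    have hprime := Nat.prime_iff_prime_int.mp pp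
    have hA1 : (p : ℤ) ∣ a1 * x₂ ^ 2 * y₂ ^ 3 := by
      have e : a1 * x₂ ^ 2 * y₂ ^ 3 =
          -((x₁ * y₁) * (a0 * x₁ * y₁ ^ 2)) - q * (a2 * x₃ ^ 2 * q ^ 2) := by linarith
      rw [e]
      exact dvd_sub (dvd_neg.mpr (hpxy.mul_right _)) (hpq.mul_right _)
    have hpa1 : ¬ (p : ℤ) ∣ a1 := (hnota p pp hpq).2
    have h2 : (p : ℤ) ∣ x₂ ^ 2 * y₂ ^ 3 := by
      rcases hprime.dvd_mul.mp hA1 with h | h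
      · rcases hprime.dvd_mul.mp h with h' | h'
        · exact absurd h' hpa1
        · exact h'.mul_right _
      · exact h.mul_left _
    have h3 : (p : ℤ) ∣ x₂ * y₂ := by
      rcases hprime.dvd_mul.mp h2 with h | h
      · exact (hprime.dvd_of_dvd_pow h).mul_right y₂
      · exact (hprime.dvd_of_dvd_pow h).mul_left x₂
    exact tripgcd p pp hpxy h3 (hpq.mul_left x₃)
  have fact2 : IsCoprime q (x₂ * y₂) := by
    apply no_common_prime_isCoprime
    intro p pp hpq hpxy
    have hprime := Nat.prime_iff_prime_int.mp pp
    have hA0 : (p : ℤ) ∣ a0 * x₁ ^ 2 * y₁ ^ 3 := by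
      have e : a0 * x₁ ^ 2 * y₁ ^ 3 =
          -((x₂ * y₂) * (a1 * x₂ * y₂ ^ 2)) - q * (a2 * x₃ ^ 2 * q ^ 2) := by linarith
      rw [e]
      exact dvd_sub (dvd_neg.mpr (hpxy.mul_right _)) (hpq.mul_right _)
    have hpa0 : ¬ (p : ℤ) ∣ a0 := (hnota p pp hpq).1
    have h2 : (p : ℤ) ∣ x₁ ^ 2 * y₁ ^ 3 := by
      rcases hprime.dvd_mul.mp hA0 with h | h
      · rcases hprime.dvd_mul.mp h with h' | h'
        · exact absurd h' hpa0
        · exact h'.mul_right _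
      · exact h.mul_left _
    have h3 : (p : ℤ) ∣ x₁ * y₁ := by
      rcases hprime.dvd_mul.mp h2 with h | h
      · exact (hprime.dvd_of_dvd_pow h).mul_right y₁
      · exact (hprime.dvd_of_dvd_pow h).mul_left x₁
    exact tripgcd p pp h3 hpxy (hpq.mul_left x₃)
  have fact3 : IsCoprime y₁ y₂ := by
    apply no_common_prime_isCoprime
    intro p pp hy1 hy2
    have hprime := Nat.prime_iff_prime_int.mp pp
    have hA2 : (p : ℤ) ∣ a2 * (x₃ ^ 2 * q ^ 3) := by
      have e : a2 * (x₃ ^ 2 * q ^ 3) =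
          -(y₁ * (a0 * x₁ ^ 2 * y₁ ^ 2)) - y₂ * (a1 * x₂ ^ 2 * y₂ ^ 2) := by linarith
      rw [e]
      exact dvd_sub (dvd_neg.mpr (hy1.mul_right _)) (hy2.mul_right _)
    have hpa2 : ¬ (p : ℤ) ∣ a2 := by
      apply hnotbig p pp
      have e2 : x₁ * x₂ * x₃ * y₁ * y₂ * q = y₁ * (x₁ * x₂ * x₃ * y₂ * q) := by ring
      rw [e2]
      exact hy1.mul_right _
    have hpq : ¬ (p : ℤ) ∣ q := by
      intro hq
      exact (Nat.prime_iff_prime_int.mp pp).not_unit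
        (fact1.isUnit_of_dvd' hq (hy1.mul_left x₁))
    have h2 : (p : ℤ) ∣ x₃ ^ 2 * q ^ 3 := by
      rcases hprime.dvd_mul.mp hA2 with h | h
      · exact absurd h hpa2
      · exact h
    have h3 : (p : ℤ) ∣ x₃ := by
      rcases hprime.dvd_mul.mp h2 with h | h
      · exact hprime.dvd_of_dvd_pow h
      · exact absurd (hprime.dvd_of_dvd_pow h) hpq
    exact tripgcd p pp (hy1.mul_left x₁) (hy2.mul_left x₂) (h3.mul_right q)
  have fact4 : IsCoprime x₁ x₂ := by
    apply no_common_prime_isCoprime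
    intro p pp hx1 hx2
    have hprime := Nat.prime_iff_prime_int.mp pp
    have hA2 : (p : ℤ) ∣ a2 * (x₃ ^ 2 * q ^ 3) := by
      have e : a2 * (x₃ ^ 2 * q ^ 3) =
          -(x₁ * (a0 * x₁ * y₁ ^ 3)) - x₂ * (a1 * x₂ * y₂ ^ 3) := by linarith
      rw [e]
      exact dvd_sub (dvd_neg.mpr (hx1.mul_right _)) (hx2.mul_right _)
    have hpa2 : ¬ (p : ℤ) ∣ a2 := by
      apply hnotbig p pp
      have e2 : x₁ * x₂ * x₃ * y₁ * y₂ * q = x₁ * (x₂ * x₃ * y₁ * y₂ * q) := by ring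
      rw [e2]
      exact hx1.mul_right _
    have hpq : ¬ (p : ℤ) ∣ q := by
      intro hq
      exact (Nat.prime_iff_prime_int.mp pp).not_unit
        (fact1.isUnit_of_dvd' hq (hx1.mul_right y₁))
    have h2 : (p : ℤ) ∣ x₃ ^ 2 * q ^ 3 := by
      rcases hprime.dvd_mul.mp hA2 with h | h
      · exact absurd h hpa2
      · exact h
    have h3 : (p : ℤ) ∣ x₃ := by
      rcases hprime.dvd_mul.mp h2 with h | h
      · exact hprime.dvd_of_dvd_pow h
      · exact absurd (hprime.dvd_of_dvd_pow h) hpq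
    exact tripgcd p pp (hx1.mul_right y₁) (hx2.mul_right y₂) (h3.mul_right q)
  have fact5 : q ∣ a0 * κ ^ 2 * y₁ + a1 * y₂ := by
    have key : (x₂ * y₂) ^ 2 * (a0 * κ ^ 2 * y₁ + a1 * y₂) =
        -(a2 * x₃ ^ 2 * q ^ 3) -
          a0 * y₁ * ((x₁ * y₁ + κ * x₂ * y₂) * (x₁ * y₁ - κ * x₂ * y₂)) := by
      linear_combination heq
    have hdq : q ∣ (x₂ * y₂) ^ 2 * (a0 * κ ^ 2 * y₁ + a1 * y₂) := by
      rw [key]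
      refine dvd_sub (dvd_neg.mpr ⟨a2 * x₃ ^ 2 * q ^ 2, by ring⟩) ?_
      exact Dvd.dvd.mul_left (hdvd.mul_right _) _
    exact (fact2.pow_right).dvd_of_dvd_mul_left hdq
  exact ⟨fact1, fact2, fact3, fact4, fact5⟩

private lemma cross_dety (q a0 a1 κ y₁ y₂ y₁' y₂' : ℤ)
    (hqa1 : IsCoprime q a1)
    (h : q ∣ a0 * κ ^ 2 * y₁ + a1 * y₂) (h' : q ∣ a0 * κ ^ 2 * y₁' + a1 * y₂') :
    q ∣ y₁ * y₂' - y₁' * y₂ := by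
  have key : a1 * (y₁ * y₂' - y₁' * y₂) =
      y₁ * (a0 * κ ^ 2 * y₁' + a1 * y₂') - y₁' * (a0 * κ ^ 2 * y₁ + a1 * y₂) := by ring
  have hd : q ∣ a1 * (y₁ * y₂' - y₁' * y₂) := by
    rw [key]; exact dvd_sub (h'.mul_left _) (h.mul_left _)
  exact hqa1.dvd_of_dvd_mul_left hd

private lemma same_y_cube_dvd (a0 a1 a2 q κ x₁ x₂ x₃ x₁' x₂' x₃' y₁ y₂ : ℤ) (r : ℕ)
    (hr_sf : Squarefree r) (hr_odd : Odd r) (hrq : (r : ℤ) ∣ q)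
    (hq_a0 : IsCoprime q a0)
    (hq_x1y1 : IsCoprime q (x₁ * y₁))
    (hq_x1'y1 : IsCoprime q (x₁' * y₁)) (hq_x2'y2 : IsCoprime q (x₂' * y₂))
    (heq : a0 * x₁ ^ 2 * y₁ ^ 3 + a1 * x₂ ^ 2 * y₂ ^ 3 + a2 * x₃ ^ 2 * q ^ 3 = 0)
    (heq' : a0 * x₁' ^ 2 * y₁ ^ 3 + a1 * x₂' ^ 2 * y₂ ^ 3 + a2 * x₃' ^ 2 * q ^ 3 = 0)
    (hdvd : q ∣ x₁ * y₁ + κ * x₂ * y₂) (hdvd' : q ∣ x₁' * y₁ + κ * x₂' * y₂) :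
    (r : ℤ) ^ 3 ∣ x₁ * x₂' - x₁' * x₂ := by
  have hq_y1 : IsCoprime q y₁ :=
    IsCoprime.of_isCoprime_of_dvd_right hq_x1y1 (dvd_mul_left y₁ x₁)
  have hdetq : q ∣ x₁ * x₂' - x₁' * x₂ := by
    have key : y₁ * (x₁ * x₂' - x₁' * x₂) =
        x₂' * (x₁ * y₁ + κ * x₂ * y₂) - x₂ * (x₁' * y₁ + κ * x₂' * y₂) := by ring
    have hd : q ∣ y₁ * (x₁ * x₂' - x₁' * x₂) := by
      rw [key]; exact dvd_sub (hdvd.mul_left _) (hdvd'.mul_left _)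
    exact hq_y1.dvd_of_dvd_mul_left hd
  have I2 : a0 * y₁ ^ 3 * ((x₁ * x₂' - x₁' * x₂) * (x₁ * x₂' + x₁' * x₂)) =
      -(a2 * q ^ 3 * (x₃ ^ 2 * x₂' ^ 2 - x₃' ^ 2 * x₂ ^ 2)) := by
    linear_combination x₂' ^ 2 * heq - x₂ ^ 2 * heq'
  have main : ∀ p : ℕ, p.Prime → p ∣ r → (p : ℤ) ^ 3 ∣ x₁ * x₂' - x₁' * x₂ := by
    intro p pp hpr
    have hprime := Nat.prime_iff_prime_int.mp pp
    have hpq : (p : ℤ) ∣ q := (Int.natCast_dvd_natCast.mpr hpr).trans hrq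
    have hp2 : p ≠ 2 := by
      rintro rfl
      rw [Nat.odd_iff, Nat.two_dvd_ne_zero.symm] at hr_odd
      exact hr_odd hpr
    have hpP : ¬ (p : ℤ) ∣ x₁ * x₂' := by
      intro h
      rcases hprime.dvd_mul.mp h with h | h
      · exact hprime.not_unit (hq_x1y1.isUnit_of_dvd' hpq (h.mul_right y₁))
      · exact hprime.not_unit (hq_x2'y2.isUnit_of_dvd' hpq (h.mul_right y₂))
    have hpS : ¬ (p : ℤ) ∣ (x₁ * x₂' + x₁' * x₂) := by
      intro hS
      have hD : (p : ℤ) ∣ (x₁ * x₂' - x₁' * x₂) := hpq.trans hdetq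
      have h2P : (p : ℤ) ∣ 2 * (x₁ * x₂') := by
        have e : 2 * (x₁ * x₂') = (x₁ * x₂' + x₁' * x₂) + (x₁ * x₂' - x₁' * x₂) := by ring
        rw [e]; exact dvd_add hS hD
      rcases hprime.dvd_mul.mp h2P with h | h
      · have : (p : ℕ) ∣ 2 := by exact_mod_cast h
        exact hp2 ((Nat.prime_dvd_prime_iff_eq pp Nat.prime_two).mp this)
      · exact hpP h
    have hI : (p : ℤ) ^ 3 ∣
        (x₁ * x₂' - x₁' * x₂) * (a0 * y₁ ^ 3 * (x₁ * x₂' + x₁' * x₂)) := by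
      have e : (x₁ * x₂' - x₁' * x₂) * (a0 * y₁ ^ 3 * (x₁ * x₂' + x₁' * x₂)) =
          a0 * y₁ ^ 3 * ((x₁ * x₂' - x₁' * x₂) * (x₁ * x₂' + x₁' * x₂)) := by ring
      rw [e, I2]
      exact dvd_neg.mpr ((pow_dvd_pow_of_dvd hpq 3).mul_left a2 |>.mul_right _)
    have hcop : IsCoprime ((p : ℤ) ^ 3) (a0 * y₁ ^ 3 * (x₁ * x₂' + x₁' * x₂)) := by
      have c1 : IsCoprime (p : ℤ) a0 := IsCoprime.of_isCoprime_of_dvd_left hq_a0 hpq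
      have c2 : IsCoprime (p : ℤ) (y₁ ^ 3) :=
        (IsCoprime.of_isCoprime_of_dvd_left hq_y1 hpq).pow_right
      have c3 : IsCoprime (p : ℤ) (x₁ * x₂' + x₁' * x₂) :=
        (Prime.coprime_iff_not_dvd hprime).mpr hpS
      exact ((c1.mul_right c2).mul_right c3).pow_left
    exact hcop.dvd_of_dvd_mul_right hI
  exact cube_dvd_of_forall_prime _ r hr_sf main

private lemma ncard_le_of_forall_mem_finset {α : Type*} (S : Set α) (F : Finset α)
    (h : ∀ t ∈ S, t ∈ F) : S.ncard ≤ F.card := by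
  have h3 : S.ncard ≤ (↑F : Set α).ncard :=
    Set.ncard_le_ncard (fun t ht => Finset.mem_coe.mpr (h t ht)) (Finset.finite_toSet F)
  rwa [Set.ncard_coe_finset] at h3

private lemma mem_unpack {a : Fin 3 → ℤ} {X Y : Fin 3 → ℝ} {q κ : ℤ} {t : ℤ × ℤ × ℤ × ℤ}
    (ht : t ∈ SqK a X Y q κ) :
    ∃ x₁ x₂ y₁ y₂ x₃ : ℤ, t = (x₁, x₂, y₁, y₂) ∧
      0 < x₁ ∧ 0 < x₂ ∧ 0 < x₃ ∧ 0 < y₁ ∧ 0 < y₂ ∧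
      (X 0 / 2 < (x₁ : ℝ) ∧ (x₁ : ℝ) ≤ X 0) ∧ (X 1 / 2 < (x₂ : ℝ) ∧ (x₂ : ℝ) ≤ X 1) ∧
      (X 2 / 2 < (x₃ : ℝ) ∧ (x₃ : ℝ) ≤ X 2) ∧
      (Y 0 / 2 < (y₁ : ℝ) ∧ (y₁ : ℝ) ≤ Y 0) ∧ (Y 1 / 2 < (y₂ : ℝ) ∧ (y₂ : ℝ) ≤ Y 1) ∧
      a 0 * x₁ ^ 2 * y₁ ^ 3 + a 1 * x₂ ^ 2 * y₂ ^ 3 + a 2 * x₃ ^ 2 * q ^ 3 = 0 ∧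
      Int.gcd (x₁ * y₁) (Int.gcd (x₂ * y₂) (x₃ * q)) = 1 ∧
      Int.gcd (a 0 * a 1 * a 2) (x₁ * x₂ * x₃ * y₁ * y₂ * q) = 1 ∧
      q ∣ x₁ * y₁ + κ * x₂ * y₂ := by
  obtain ⟨x₁, x₂, y₁, y₂, rfl, hx₁, hx₂, hy₁, hy₂, hdvd, x₃, hx₃, hS0⟩ := ht
  obtain ⟨hp1, hp2, hXr, hYr, heq, hg1, hg2, hsf⟩ := hS0
  refine ⟨x₁, x₂, y₁, y₂, x₃, rfl, hx₁, hx₂, hx₃, hy₁, hy₂, ?_, ?_, ?_, ?_, ?_, ?_, ?_, ?_, hdvd⟩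
  · simpa using hXr 0
  · simpa using hXr 1
  · simpa using hXr 2
  · simpa using hYr 0
  · simpa using hYr 1
  · simpa using heq
  · simpa using hg1
  · simpa using hg2

set_option maxHeartbeats 1000000 in
set_option maxRecDepth 4000 in
/-- For every `ε > 0` there is a constant `C(ε)` such that for every admissible pair `(q, κ)`
one has `#S(q, κ) ≤ C(ε) Y₁Y₂Y₃^{-1} B^ε`. -/
theorem SqK_bound (ε : ℝ) (hε : 0 < ε) :
    ∃ C : ℝ, 0 < C ∧ ∀ (a : Fin 3 → ℤ) (X Y : Fin 3 → ℝ) (B : ℝ),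
      2 ≤ B → (∀ i, a i ≠ 0) → (∀ i, Squarefree (a i)) →
      (∀ i j, i ≠ j → IsCoprime (a i) (a j)) →
      (∀ i, 1 ≤ X i) → (∀ i, 1 ≤ Y i) →
      (∀ i, X i ^ 2 * Y i ^ 3 ≤ 32 * B / |(a i : ℝ)|) →
      (∀ i, B ^ ((1 : ℝ) / 5 - 1 / 60) ≤ X i ∧ X i ≤ B ^ ((1 : ℝ) / 5 + 1 / 60)) →
      (∀ i, B ^ ((1 : ℝ) / 5 - 1 / 90) ≤ Y i ∧ Y i ≤ B ^ ((1 : ℝ) / 5 + 1 / 90)) →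
      ∀ q κ : ℤ, Squarefree q → Y 2 / 2 < (q : ℝ) → (q : ℝ) ≤ Y 2 →
        IsCoprime q (a 0 * a 1) → IsCoprime κ q →
        ((SqK a X Y q κ).ncard : ℝ) ≤ C * (Y 0 * Y 1 * (Y 2)⁻¹) * B ^ ε := by
  refine ⟨(2 : ℝ) ^ (50 : ℕ), by positivity, ?_⟩
  intro a X Y B hB ha0 hasf hacop hX1 hY1 hXY hXr hYr q κ hqsf hql hqu hqa hκq
  have hB0 : (0 : ℝ) < B := by linarith only [hB]
  have hB1 : (1 : ℝ) ≤ B := by linarith only [hB]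
  have hεB : (1 : ℝ) ≤ B ^ ε := Real.one_le_rpow hB1 hε.le
  have hY0p : (0 : ℝ) < Y 0 := lt_of_lt_of_le one_pos (hY1 0)
  have hY1p : (0 : ℝ) < Y 1 := lt_of_lt_of_le one_pos (hY1 1)
  have hY2p : (0 : ℝ) < Y 2 := lt_of_lt_of_le one_pos (hY1 2)
  have hX0p : (0 : ℝ) < X 0 := lt_of_lt_of_le one_pos (hX1 0)
  have hX1p : (0 : ℝ) < X 1 := lt_of_lt_of_le one_pos (hX1 1)
  have hqR : (0 : ℝ) < (q : ℝ) := lt_trans (by linarith only [hY2p]) hql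
  have hq0 : (0 : ℤ) < q := by exact_mod_cast hqR
  -- `Y 2 ≤ Y 0 * Y 1`, hence `1 ≤ Y 0 * Y 1 * (Y 2)⁻¹`
  have hY2le : Y 2 ≤ Y 0 * Y 1 := by
    have h1 : Y 2 ≤ B ^ ((1 : ℝ) / 5 + 1 / 90) := (hYr 2).2
    have h2 : B ^ ((1 : ℝ) / 5 + 1 / 90) ≤
        B ^ (((1 : ℝ) / 5 - 1 / 90) + ((1 : ℝ) / 5 - 1 / 90)) :=
      Real.rpow_le_rpow_of_exponent_le hB1 (by norm_num)
    have h3 : B ^ (((1 : ℝ) / 5 - 1 / 90) + ((1 : ℝ) / 5 - 1 / 90)) =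
        B ^ ((1 : ℝ) / 5 - 1 / 90) * B ^ ((1 : ℝ) / 5 - 1 / 90) := Real.rpow_add hB0 _ _
    have h4 : B ^ ((1 : ℝ) / 5 - 1 / 90) * B ^ ((1 : ℝ) / 5 - 1 / 90) ≤ Y 0 * Y 1 :=
      mul_le_mul (hYr 0).1 (hYr 1).1 (Real.rpow_nonneg hB0.le _) hY0p.le
    calc Y 2 ≤ B ^ ((1 : ℝ) / 5 + 1 / 90) := h1
      _ ≤ B ^ (((1 : ℝ) / 5 - 1 / 90) + ((1 : ℝ) / 5 - 1 / 90)) := h2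
      _ = B ^ ((1 : ℝ) / 5 - 1 / 90) * B ^ ((1 : ℝ) / 5 - 1 / 90) := h3
      _ ≤ Y 0 * Y 1 := h4
  have hYY1 : (1 : ℝ) ≤ Y 0 * Y 1 * (Y 2)⁻¹ := by
    rw [← mul_inv_cancel₀ hY2p.ne']
    exact mul_le_mul_of_nonneg_right hY2le (inv_nonneg.mpr hY2p.le)
  have hYYnn : (0 : ℝ) ≤ Y 0 * Y 1 * (Y 2)⁻¹ := by positivity
  by_cases hbig : (64 : ℝ) ≤ B ^ ((2 : ℝ) / 15)
  · -- main case
    -- odd part of q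
    obtain ⟨r, hr_sf, hr_odd, hrq, hr_half⟩ :
        ∃ r : ℕ, Squarefree r ∧ Odd r ∧ (r : ℤ) ∣ q ∧ (q : ℝ) ≤ 2 * (r : ℝ) := by
      have hsfn : Squarefree q.natAbs := Int.squarefree_natAbs.mpr hqsf
      have hcast : ((q.natAbs : ℤ)) = q := Int.natAbs_of_nonneg hq0.le
      by_cases h2 : 2 ∣ q.natAbs
      · refine ⟨q.natAbs / 2, hsfn.squarefree_of_dvd (Nat.div_dvd_of_dvd h2), ?_, ?_, ?_⟩
        · rw [Nat.odd_iff, Nat.two_dvd_ne_zero.symm]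
          intro h4
          have : 2 * 2 ∣ q.natAbs := by
            obtain ⟨k, hk⟩ := h4
            obtain ⟨l, hl⟩ := h2
            exact ⟨k, by omega⟩
          exact Nat.prime_two.ne_one (Nat.isUnit_iff.mp (hsfn 2 this))
        · exact (Int.natCast_dvd_natCast.mpr (Nat.div_dvd_of_dvd h2)).trans hcast.dvd
        · have : 2 * (q.natAbs / 2) = q.natAbs := Nat.mul_div_cancel' h2
          have hr : ((q.natAbs / 2 : ℕ) : ℝ) * 2 = ((q.natAbs : ℕ) : ℝ) := by
            exact_mod_cast congrArg (Nat.cast : ℕ → ℝ) (by omega : q.natAbs / 2 * 2 = q.natAbs)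
          have hq' : ((q.natAbs : ℕ) : ℝ) = (q : ℝ) := by
            rw [Nat.cast_natAbs, abs_of_nonneg]
            exact_mod_cast hq0.le
          linarith only [hr, hq']
      · refine ⟨q.natAbs, hsfn, Nat.odd_iff.mpr (Nat.two_dvd_ne_zero.mp h2), hcast.dvd, ?_⟩
        have hq' : ((q.natAbs : ℕ) : ℝ) = (q : ℝ) := by
          rw [Nat.cast_natAbs, abs_of_nonneg]
          exact_mod_cast hq0.le
        linarith only [hq', hqR]
    have hrR : (q : ℝ) / 2 ≤ (r : ℝ) := by linarith only [hr_half]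
    -- the injection
    set S := SqK a X Y q κ with hSdef
    set u : ℤ × ℤ × ℤ × ℤ → ℝ :=
      fun t => 2 * (Y 0) ^ 2 * (t.2.2.2 : ℝ) / ((q : ℝ) * (t.2.2.1 : ℝ)) with hu
    set f : ℤ × ℤ × ℤ × ℤ → ℕ := fun t => (⌊u t⌋).toNat with hf
    have hqa0 : IsCoprime q (a 0) :=
      IsCoprime.of_isCoprime_of_dvd_right hqa (dvd_mul_right (a 0) (a 1))
    have hqa1 : IsCoprime q (a 1) :=
      IsCoprime.of_isCoprime_of_dvd_right hqa (dvd_mul_left (a 1) (a 0))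
    have hinj : ∀ t ∈ S, ∀ t' ∈ S, f t = f t' → t = t' := by
      intro t ht t' ht' hft
      obtain ⟨x₁, x₂, y₁, y₂, x₃, rfl, hx₁p, hx₂p, hx₃p, hy₁p, hy₂p,
        hx₁r, hx₂r, hx₃r, hy₁r, hy₂r, heq, hg1, hg2, hdvd⟩ := mem_unpack ht
      obtain ⟨x₁', x₂', y₁', y₂', x₃', rfl, hx₁p', hx₂p', hx₃p', hy₁p', hy₂p',
        hx₁r', hx₂r', hx₃r', hy₁r', hy₂r', heq', hg1', hg2', hdvd'⟩ := mem_unpack ht'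
      obtain ⟨c1, c2, c3, c4, c5⟩ :=
        sol_facts (a 0) (a 1) (a 2) q κ x₁ x₂ x₃ y₁ y₂ hqa heq hg1 hg2 hdvd
      obtain ⟨c1', c2', c3', c4', c5'⟩ :=
        sol_facts (a 0) (a 1) (a 2) q κ x₁' x₂' x₃' y₁' y₂' hqa heq' hg1' hg2' hdvd'
      -- real positivity
      have hy₁R : (0 : ℝ) < (y₁ : ℝ) := by exact_mod_cast hy₁p
      have hy₂R : (0 : ℝ) < (y₂ : ℝ) := by exact_mod_cast hy₂p
      have hy₁R' : (0 : ℝ) < (y₁' : ℝ) := by exact_mod_cast hy₁p'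
      have hy₂R' : (0 : ℝ) < (y₂' : ℝ) := by exact_mod_cast hy₂p'
      -- floor equality
      have hU : u (x₁, x₂, y₁, y₂) = 2 * (Y 0) ^ 2 * (y₂ : ℝ) / ((q : ℝ) * (y₁ : ℝ)) := rfl
      have hU' : u (x₁', x₂', y₁', y₂') =
          2 * (Y 0) ^ 2 * (y₂' : ℝ) / ((q : ℝ) * (y₁' : ℝ)) := rfl
      have hUnn : 0 ≤ u (x₁, x₂, y₁, y₂) := by rw [hU]; positivity
      have hUnn' : 0 ≤ u (x₁', x₂', y₁', y₂') := by rw [hU']; positivity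
      have hflr : ⌊u (x₁, x₂, y₁, y₂)⌋ = ⌊u (x₁', x₂', y₁', y₂')⌋ := by
        have e1 := Int.toNat_of_nonneg (Int.floor_nonneg.mpr hUnn)
        have e2 := Int.toNat_of_nonneg (Int.floor_nonneg.mpr hUnn')
        simp only [hf] at hft
        omega
      have habs : |u (x₁', x₂', y₁', y₂') - u (x₁, x₂, y₁, y₂)| < 1 := by
        have l1 : ((⌊u (x₁, x₂, y₁, y₂)⌋ : ℤ) : ℝ) ≤ u (x₁, x₂, y₁, y₂) :=
          Int.floor_le (u (x₁, x₂, y₁, y₂))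
        have l2 : u (x₁, x₂, y₁, y₂) < ((⌊u (x₁, x₂, y₁, y₂)⌋ : ℤ) : ℝ) + 1 :=
          Int.lt_floor_add_one (u (x₁, x₂, y₁, y₂))
        have l3 : ((⌊u (x₁', x₂', y₁', y₂')⌋ : ℤ) : ℝ) ≤ u (x₁', x₂', y₁', y₂') :=
          Int.floor_le (u (x₁', x₂', y₁', y₂'))
        have l4 : u (x₁', x₂', y₁', y₂') < ((⌊u (x₁', x₂', y₁', y₂')⌋ : ℤ) : ℝ) + 1 :=
          Int.lt_floor_add_one (u (x₁', x₂', y₁', y₂'))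
        have hfl : ((⌊u (x₁, x₂, y₁, y₂)⌋ : ℤ) : ℝ) = ((⌊u (x₁', x₂', y₁', y₂')⌋ : ℤ) : ℝ) := by
          exact_mod_cast congrArg (Int.cast : ℤ → ℝ) hflr
        rw [abs_lt]
        constructor
        · linarith only [l1, l2, l3, l4, hfl]
        · linarith only [l1, l2, l3, l4, hfl]
      -- determinant identity and bound
      set D : ℤ := y₁ * y₂' - y₁' * y₂ with hD
      have hqyy : (0 : ℝ) < (q : ℝ) * (y₁ : ℝ) * (y₁' : ℝ) := by positivity
      have hqy1 : (q : ℝ) * (y₁ : ℝ) ≠ 0 := by positivity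
      have hqy1' : (q : ℝ) * (y₁' : ℝ) ≠ 0 := by positivity
      have e1 : u (x₁, x₂, y₁, y₂) * ((q : ℝ) * (y₁ : ℝ)) = 2 * (Y 0) ^ 2 * (y₂ : ℝ) := by
        rw [hU]; exact div_mul_cancel₀ _ hqy1
      have e1' : u (x₁', x₂', y₁', y₂') * ((q : ℝ) * (y₁' : ℝ)) =
          2 * (Y 0) ^ 2 * (y₂' : ℝ) := by
        rw [hU']; exact div_mul_cancel₀ _ hqy1'
      have key : (u (x₁', x₂', y₁', y₂') - u (x₁, x₂, y₁, y₂)) *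
          ((q : ℝ) * (y₁ : ℝ) * (y₁' : ℝ)) = 2 * (Y 0) ^ 2 * ((D : ℤ) : ℝ) := by
        rw [hD]
        push_cast
        linear_combination (y₁ : ℝ) * e1' - (y₁' : ℝ) * e1
      have hDbound : |((D : ℤ) : ℝ)| < (q : ℝ) := by
        have h1 : |2 * (Y 0) ^ 2 * ((D : ℤ) : ℝ)| =
            |u (x₁', x₂', y₁', y₂') - u (x₁, x₂, y₁, y₂)| *
              ((q : ℝ) * (y₁ : ℝ) * (y₁' : ℝ)) := by
          rw [← key, abs_mul, abs_of_pos hqyy]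
        have h2 : |2 * (Y 0) ^ 2 * ((D : ℤ) : ℝ)| = 2 * (Y 0) ^ 2 * |((D : ℤ) : ℝ)| := by
          rw [abs_mul, abs_of_pos (by positivity : (0:ℝ) < 2 * (Y 0) ^ 2)]
        have h3 : |u (x₁', x₂', y₁', y₂') - u (x₁, x₂, y₁, y₂)| *
            ((q : ℝ) * (y₁ : ℝ) * (y₁' : ℝ)) ≤ 1 * ((q : ℝ) * Y 0 * Y 0) := by
          apply mul_le_mul habs.le _ hqyy.le zero_le_one
          exact mul_le_mul (mul_le_mul le_rfl (hy₁r).2 hy₁R.le hqR.le) (hy₁r').2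
            hy₁R'.le (by positivity)
        have h4 : 2 * (Y 0) ^ 2 * |((D : ℤ) : ℝ)| ≤ (q : ℝ) / 2 * (2 * (Y 0) ^ 2) := by
          have h5 : 2 * (Y 0) ^ 2 * |((D : ℤ) : ℝ)| ≤ 1 * ((q : ℝ) * Y 0 * Y 0) := by
            rw [← h2, h1]
            exact h3
          have h6 : 1 * ((q : ℝ) * Y 0 * Y 0) = (q : ℝ) / 2 * (2 * (Y 0) ^ 2) := by ring
          linarith only [h5, h6]
        have h7 : |((D : ℤ) : ℝ)| ≤ (q : ℝ) / 2 := by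
          have hpos : (0 : ℝ) < 2 * (Y 0) ^ 2 := by positivity
          have h8 : |((D : ℤ) : ℝ)| * (2 * (Y 0) ^ 2) ≤ (q : ℝ) / 2 * (2 * (Y 0) ^ 2) := by
            linarith only [h4]
          exact le_of_mul_le_mul_right h8 hpos
        linarith only [h7, hqR]
      have hDdvd : q ∣ D := cross_dety q (a 0) (a 1) κ y₁ y₂ y₁' y₂' hqa1 c5 c5'
      have hD0 : D = 0 := by
        by_contra hD0
        have h1 : q ≤ |D| := Int.le_of_dvd (abs_pos.mpr hD0) ((dvd_abs q D).mpr hDdvd)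
        have h2 : (q : ℝ) ≤ |((D : ℤ) : ℝ)| := by
          rw [← Int.cast_abs]; exact_mod_cast h1
        linarith only [h2, hDbound]
      -- y-pair equality
      have hyy : y₁ * y₂' = y₁' * y₂ := by
        have h := hD0
        rw [hD] at h
        exact sub_eq_zero.mp h
      have hy1d : y₁ ∣ y₁' := c3.dvd_of_dvd_mul_right ⟨y₂', hyy.symm⟩
      have hy1d' : y₁' ∣ y₁ := c3'.dvd_of_dvd_mul_right ⟨y₂, hyy⟩
      have hy1e : y₁ = y₁' := Int.dvd_antisymm hy₁p.le hy₁p'.le hy1d hy1d'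
      have hy2e : y₂ = y₂' := by
        have : y₁ * y₂' = y₁ * y₂ := by rw [hyy, hy1e]
        exact (mul_left_cancel₀ hy₁p.ne' this).symm
      subst hy1e
      subst hy2e
      -- x-pair equality via the cube divisibility
      have hcube : (r : ℤ) ^ 3 ∣ x₁ * x₂' - x₁' * x₂ :=
        same_y_cube_dvd (a 0) (a 1) (a 2) q κ x₁ x₂ x₃ x₁' x₂' x₃' y₁ y₂ r
          hr_sf hr_odd hrq hqa0 c1 c1' c2' heq heq' hdvd hdvd'
      set Dx : ℤ := x₁ * x₂' - x₁' * x₂ with hDx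
      have hDx0 : Dx = 0 := by
        by_contra hDx0
        have h1 : (r : ℤ) ^ 3 ≤ |Dx| :=
          Int.le_of_dvd (abs_pos.mpr hDx0) ((dvd_abs _ _).mpr hcube)
        have h2 : ((r : ℝ)) ^ 3 ≤ |((Dx : ℤ) : ℝ)| := by
          rw [← Int.cast_abs]
          exact_mod_cast h1
        -- upper bound |Dx| < X 0 * X 1
        have hx₁R : (0 : ℝ) < (x₁ : ℝ) := by exact_mod_cast hx₁p
        have hx₂R : (0 : ℝ) < (x₂ : ℝ) := by exact_mod_cast hx₂p
        have hx₁R' : (0 : ℝ) < (x₁' : ℝ) := by exact_mod_cast hx₁p'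
        have hx₂R' : (0 : ℝ) < (x₂' : ℝ) := by exact_mod_cast hx₂p'
        have hup : |((Dx : ℤ) : ℝ)| < X 0 * X 1 := by
          rw [hDx]
          push_cast
          rw [abs_lt]
          have m1 : (x₁ : ℝ) * (x₂' : ℝ) ≤ X 0 * X 1 :=
            mul_le_mul hx₁r.2 hx₂r'.2 hx₂R'.le hX0p.le
          have m1' : (x₁' : ℝ) * (x₂ : ℝ) ≤ X 0 * X 1 :=
            mul_le_mul hx₁r'.2 hx₂r.2 hx₂R.le hX0p.le
          have m2 : (0 : ℝ) < (x₁ : ℝ) * (x₂' : ℝ) := mul_pos hx₁R hx₂R'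
          have m2' : (0 : ℝ) < (x₁' : ℝ) * (x₂ : ℝ) := mul_pos hx₁R' hx₂R
          constructor
          · linarith only [m1', m2]
          · linarith only [m1, m2']
        -- size comparison : X 0 * X 1 ≤ (Y 2)^3 / 64 < r^3
        have hXX : X 0 * X 1 ≤ B ^ ((1 : ℝ) / 5 + 1 / 60) * B ^ ((1 : ℝ) / 5 + 1 / 60) :=
          mul_le_mul (hXr 0).2 (hXr 1).2 hX1p.le (Real.rpow_nonneg hB0.le _)
        have hXXe : B ^ ((1 : ℝ) / 5 + 1 / 60) * B ^ ((1 : ℝ) / 5 + 1 / 60) * B ^ ((2:ℝ)/15) =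
            B ^ (3 * ((1 : ℝ) / 5 - 1 / 90)) := by
          rw [← Real.rpow_add hB0, ← Real.rpow_add hB0]
          congr 1
          norm_num
        have hY2c : B ^ (3 * ((1 : ℝ) / 5 - 1 / 90)) ≤ (Y 2) ^ 3 := by
          have h0 : B ^ ((1 : ℝ) / 5 - 1 / 90) ≤ Y 2 := (hYr 2).1
          have h1 : (B ^ ((1 : ℝ) / 5 - 1 / 90)) ^ (3 : ℕ) ≤ (Y 2) ^ (3 : ℕ) :=
            pow_le_pow_left₀ (Real.rpow_nonneg hB0.le _) h0 3
          calc B ^ (3 * ((1 : ℝ) / 5 - 1 / 90)) = (B ^ ((1 : ℝ) / 5 - 1 / 90)) ^ (3 : ℕ) := by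
                rw [← Real.rpow_natCast (B ^ ((1 : ℝ) / 5 - 1 / 90)) 3,
                  ← Real.rpow_mul hB0.le]
                congr 1
                norm_num
            _ ≤ (Y 2) ^ 3 := h1
        have hrY2 : Y 2 < 4 * (r : ℝ) := by
          have hh : Y 2 < 2 * (q : ℝ) := by linarith only [hql]
          linarith only [hh, hr_half]
        have hr3 : (Y 2) ^ 3 < 64 * ((r : ℝ)) ^ 3 := by
          have h0 : (Y 2) ^ 3 < (4 * (r : ℝ)) ^ 3 :=
            pow_lt_pow_left₀ hrY2 hY2p.le (by norm_num)
          have h0' : (4 * (r : ℝ)) ^ 3 = 64 * ((r : ℝ)) ^ 3 := by ring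
          linarith only [h0, h0']
        have h64 : 64 * (X 0 * X 1) ≤ (Y 2) ^ 3 := by
          calc 64 * (X 0 * X 1)
              ≤ B ^ ((2:ℝ)/15) * (B ^ ((1 : ℝ) / 5 + 1 / 60) * B ^ ((1 : ℝ) / 5 + 1 / 60)) := by
                apply mul_le_mul hbig hXX (by positivity) (Real.rpow_nonneg hB0.le _)
            _ = B ^ (3 * ((1 : ℝ) / 5 - 1 / 90)) := by rw [← hXXe]; ring
            _ ≤ (Y 2) ^ 3 := hY2c
        linarith only [h2, hup, hr3, h64]
      have hxx : x₁ * x₂' = x₁' * x₂ := by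
        have h := hDx0
        rw [hDx] at h
        exact sub_eq_zero.mp h
      have hx2e : x₂ = x₂' := by
        have d1 : x₂ ∣ x₂' := (c4.symm).dvd_of_dvd_mul_right
          ⟨x₁', by linear_combination hxx⟩
        have d2 : x₂' ∣ x₂ := (c4'.symm).dvd_of_dvd_mul_right
          ⟨x₁, by linear_combination -hxx⟩
        exact Int.dvd_antisymm hx₂p.le hx₂p'.le d1 d2
      have hx1e : x₁ = x₁' := by
        rw [hx2e] at hxx
        exact mul_right_cancel₀ hx₂p'.ne' hxx
      rw [hx1e, hx2e]
    -- counting via the injection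
    set m : ℕ := ⌊4 * Y 0 * Y 1 / (q : ℝ)⌋₊ + 1 with hm
    have hmapsto : ∀ t ∈ S, f t ∈ Finset.range m := by
      intro t ht
      obtain ⟨x₁, x₂, y₁, y₂, x₃, rfl, hx₁p, hx₂p, hx₃p, hy₁p, hy₂p,
        hx₁r, hx₂r, hx₃r, hy₁r, hy₂r, heq, hg1, hg2, hdvd⟩ := mem_unpack ht
      have hy₁R : (0 : ℝ) < (y₁ : ℝ) := by exact_mod_cast hy₁p
      have hy₂R : (0 : ℝ) < (y₂ : ℝ) := by exact_mod_cast hy₂p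
      have hU : u (x₁, x₂, y₁, y₂) = 2 * (Y 0) ^ 2 * (y₂ : ℝ) / ((q : ℝ) * (y₁ : ℝ)) := rfl
      have hUnn : 0 ≤ u (x₁, x₂, y₁, y₂) := by rw [hU]; positivity
      have hub : u (x₁, x₂, y₁, y₂) ≤ 4 * Y 0 * Y 1 / (q : ℝ) := by
        rw [hU, div_le_div_iff₀ (by positivity) hqR]
        have s1 : 2 * (Y 0) ^ 2 * (y₂ : ℝ) * (q : ℝ) ≤ 2 * (Y 0) ^ 2 * Y 1 * (q : ℝ) :=
          mul_le_mul_of_nonneg_right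
            (mul_le_mul_of_nonneg_left hy₂r.2 (by positivity)) hqR.le
        have s2 : 2 * (Y 0) ^ 2 * Y 1 * (q : ℝ) = 4 * Y 0 * Y 1 * ((q : ℝ) * (Y 0 / 2)) := by
          ring
        have s3 : 4 * Y 0 * Y 1 * ((q : ℝ) * (Y 0 / 2)) ≤
            4 * Y 0 * Y 1 * ((q : ℝ) * (y₁ : ℝ)) :=
          mul_le_mul_of_nonneg_left
            (mul_le_mul_of_nonneg_left hy₁r.1.le hqR.le) (by positivity)
        linarith only [s1, s2.le, s2.ge, s3]
      have hle : (f (x₁, x₂, y₁, y₂) : ℝ) ≤ 4 * Y 0 * Y 1 / (q : ℝ) := by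
        have e1 := Int.toNat_of_nonneg (Int.floor_nonneg.mpr hUnn)
        have e2 : ((f (x₁, x₂, y₁, y₂) : ℕ) : ℝ) = ((⌊u (x₁, x₂, y₁, y₂)⌋ : ℤ) : ℝ) := by
          simp only [hf]
          exact_mod_cast congrArg (Int.cast : ℤ → ℝ) e1
        rw [e2]
        exact le_trans (Int.floor_le _) hub
      have : f (x₁, x₂, y₁, y₂) ≤ ⌊4 * Y 0 * Y 1 / (q : ℝ)⌋₊ := Nat.le_floor hle
      simp only [Finset.mem_range, hm]
      omega
    have hNle : ((S.ncard : ℕ) : ℝ) ≤ (m : ℝ) := by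
      have hinj' : Set.InjOn f S := fun t ht t' ht' h => hinj t ht t' ht' h
      have h1 : S.ncard = (f '' S).ncard := (Set.ncard_image_of_injOn hinj').symm
      have h2 : f '' S ⊆ ↑(Finset.range m) := by
        rintro _ ⟨t, ht, rfl⟩
        simpa using hmapsto t ht
      have h3 : (f '' S).ncard ≤ (↑(Finset.range m) : Set ℕ).ncard :=
        Set.ncard_le_ncard h2 (Finset.range m).finite_toSet
      rw [Set.ncard_coe_finset, Finset.card_range] at h3
      rw [h1]
      exact_mod_cast h3
    -- final numeric bound
    have hmR : (m : ℝ) ≤ 4 * Y 0 * Y 1 / (q : ℝ) + 1 := by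
      have h0 : (0 : ℝ) ≤ 4 * Y 0 * Y 1 / (q : ℝ) := by positivity
      have hfl := Nat.floor_le h0
      simp only [hm]
      push_cast
      linarith only [hfl]
    have hq2 : 4 * Y 0 * Y 1 / (q : ℝ) ≤ 8 * (Y 0 * Y 1 * (Y 2)⁻¹) := by
      have step : 4 * Y 0 * Y 1 / (q : ℝ) ≤ 4 * Y 0 * Y 1 / (Y 2 / 2) :=
        div_le_div_of_nonneg_left (by positivity) (by positivity) (by linarith only [hql])
      have eq2 : 4 * Y 0 * Y 1 / (Y 2 / 2) = 8 * (Y 0 * Y 1 * (Y 2)⁻¹) := by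
        field_simp
        ring
      linarith only [step, eq2.le, eq2.ge]
    calc ((SqK a X Y q κ).ncard : ℝ) ≤ (m : ℝ) := hNle
      _ ≤ 4 * Y 0 * Y 1 / (q : ℝ) + 1 := hmR
      _ ≤ 8 * (Y 0 * Y 1 * (Y 2)⁻¹) + 1 * (Y 0 * Y 1 * (Y 2)⁻¹) := by
          linarith only [hq2, hYY1]
      _ = 9 * (Y 0 * Y 1 * (Y 2)⁻¹) := by ring
      _ ≤ (2 : ℝ) ^ (50 : ℕ) * (Y 0 * Y 1 * (Y 2)⁻¹) * B ^ ε := by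
          have h9 : (9 : ℝ) ≤ (2 : ℝ) ^ (50 : ℕ) * B ^ ε := by
            calc (9 : ℝ) ≤ (2 : ℝ) ^ (50 : ℕ) := by norm_num
              _ = (2 : ℝ) ^ (50 : ℕ) * 1 := by ring
              _ ≤ (2 : ℝ) ^ (50 : ℕ) * B ^ ε :=
                  mul_le_mul_of_nonneg_left hεB (by positivity)
          calc 9 * (Y 0 * Y 1 * (Y 2)⁻¹)
              ≤ ((2 : ℝ) ^ (50 : ℕ) * B ^ ε) * (Y 0 * Y 1 * (Y 2)⁻¹) :=
                mul_le_mul_of_nonneg_right h9 hYYnn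
            _ = (2 : ℝ) ^ (50 : ℕ) * (Y 0 * Y 1 * (Y 2)⁻¹) * B ^ ε := by ring
  · -- trivial case : B ^ (2/15) < 64
    push_neg at hbig
    have hBpow : (0:ℝ) ≤ B ^ ((2:ℝ)/15) := Real.rpow_nonneg hB0.le _
    -- coordinate bounds
    have hXb : B ^ ((1 : ℝ) / 5 + 1 / 60) ≤ 1024 := by
      have e1 : B ^ ((1 : ℝ) / 5 + 1 / 60) = (B ^ ((2:ℝ)/15)) ^ ((13:ℝ)/8) := by
        rw [← Real.rpow_mul hB0.le]
        congr 1
        norm_num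
      rw [e1]
      calc (B ^ ((2:ℝ)/15)) ^ ((13:ℝ)/8) ≤ (64 : ℝ) ^ ((13:ℝ)/8) :=
            Real.rpow_le_rpow hBpow hbig.le (by norm_num)
        _ ≤ 1024 := by
            rw [show (64:ℝ) = 2 ^ (6:ℕ) by norm_num, ← Real.rpow_natCast 2 6,
              ← Real.rpow_mul (by norm_num : (0:ℝ) ≤ 2)]
            calc (2:ℝ) ^ ((6:ℕ) * ((13:ℝ)/8)) ≤ (2:ℝ) ^ ((10:ℝ)) := by
                  apply Real.rpow_le_rpow_of_exponent_le one_le_two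
                  norm_num
              _ = 1024 := by
                  rw [show (10:ℝ) = ((10:ℕ):ℝ) by norm_num, Real.rpow_natCast]
                  norm_num
    have hYb : B ^ ((1 : ℝ) / 5 + 1 / 90) ≤ 1024 := by
      have e1 : B ^ ((1 : ℝ) / 5 + 1 / 90) = (B ^ ((2:ℝ)/15)) ^ ((19:ℝ)/12) := by
        rw [← Real.rpow_mul hB0.le]
        congr 1
        norm_num
      rw [e1]
      calc (B ^ ((2:ℝ)/15)) ^ ((19:ℝ)/12) ≤ (64 : ℝ) ^ ((19:ℝ)/12) :=
            Real.rpow_le_rpow hBpow hbig.le (by norm_num)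
        _ ≤ 1024 := by
            rw [show (64:ℝ) = 2 ^ (6:ℕ) by norm_num, ← Real.rpow_natCast 2 6,
              ← Real.rpow_mul (by norm_num : (0:ℝ) ≤ 2)]
            calc (2:ℝ) ^ ((6:ℕ) * ((19:ℝ)/12)) ≤ (2:ℝ) ^ ((10:ℝ)) := by
                  apply Real.rpow_le_rpow_of_exponent_le one_le_two
                  norm_num
              _ = 1024 := by
                  rw [show (10:ℝ) = ((10:ℕ):ℝ) by norm_num, Real.rpow_natCast]
                  norm_num
    -- coordinate bounds for all members
    have hbox : ∀ t ∈ SqK a X Y q κ, 1 ≤ t.1 ∧ t.1 ≤ 1024 ∧ 1 ≤ t.2.1 ∧ t.2.1 ≤ 1024 ∧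
        1 ≤ t.2.2.1 ∧ t.2.2.1 ≤ 1024 ∧ 1 ≤ t.2.2.2 ∧ t.2.2.2 ≤ 1024 := by
      intro t ht
      obtain ⟨x₁, x₂, y₁, y₂, x₃, hteq, hx₁p, hx₂p, hx₃p, hy₁p, hy₂p,
        hx₁r, hx₂r, hx₃r, hy₁r, hy₂r, heq, hg1, hg2, hdvd⟩ := mem_unpack ht
      subst hteq
      have b1 : x₁ ≤ 1024 := by
        have hbb : (x₁ : ℝ) ≤ 1024 := hx₁r.2.trans ((hXr 0).2.trans hXb)
        exact_mod_cast hbb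
      have b2 : x₂ ≤ 1024 := by
        have hbb : (x₂ : ℝ) ≤ 1024 := hx₂r.2.trans ((hXr 1).2.trans hXb)
        exact_mod_cast hbb
      have b3 : y₁ ≤ 1024 := by
        have hbb : (y₁ : ℝ) ≤ 1024 := hy₁r.2.trans ((hYr 0).2.trans hYb)
        exact_mod_cast hbb
      have b4 : y₂ ≤ 1024 := by
        have hbb : (y₂ : ℝ) ≤ 1024 := hy₂r.2.trans ((hYr 1).2.trans hYb)
        exact_mod_cast hbb
      exact ⟨hx₁p, b1, hx₂p, b2, hy₁p, b3, hy₂p, b4⟩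
    -- counting via the finite box
    have hcount : ((SqK a X Y q κ).ncard : ℝ) ≤ 1024 ^ 4 := by
      have h := ncard_le_of_forall_mem_finset (SqK a X Y q κ)
        ((Finset.Icc (1:ℤ) 1024) ×ˢ ((Finset.Icc (1:ℤ) 1024) ×ˢ
          ((Finset.Icc (1:ℤ) 1024) ×ˢ (Finset.Icc (1:ℤ) 1024)))) ?_
      · have hc : ((Finset.Icc (1:ℤ) 1024) ×ˢ ((Finset.Icc (1:ℤ) 1024) ×ˢ
            ((Finset.Icc (1:ℤ) 1024) ×ˢ (Finset.Icc (1:ℤ) 1024)))).card = 1024 ^ 4 := by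
          have h1 : (Finset.Icc (1:ℤ) 1024).card = 1024 := by
            rw [Int.card_Icc]
            rfl
          simp only [Finset.card_product, h1]
          norm_num
        rw [hc] at h
        exact_mod_cast h
      · intro t ht
        have hb' := hbox t ht
        simp only [Finset.mem_product, Finset.mem_Icc]
        exact ⟨⟨hb'.1, hb'.2.1⟩, ⟨⟨hb'.2.2.1, hb'.2.2.2.1⟩,
          ⟨⟨hb'.2.2.2.2.1, hb'.2.2.2.2.2.1⟩, ⟨hb'.2.2.2.2.2.2.1, hb'.2.2.2.2.2.2.2⟩⟩⟩⟩
    calc ((SqK a X Y q κ).ncard : ℝ) ≤ 1024 ^ 4 := hcount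
      _ ≤ (2:ℝ) ^ (50 : ℕ) := by norm_num
      _ = (2:ℝ) ^ (50 : ℕ) * 1 * 1 := by ring
      _ ≤ (2:ℝ) ^ (50 : ℕ) * (Y 0 * Y 1 * (Y 2)⁻¹) * B ^ ε := by
          apply mul_le_mul _ hεB zero_le_one (by positivity)
          exact mul_le_mul_of_nonneg_left hYY1 (by positivity)
end
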